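/- arXiv:1102.0209 — 7 statements merged into one kernel-verified Lean document; each statement's English description precedes it below -/
import Mathlib

section
/- Let ABC be an acute triangle with orthocenter H, and let B', C' be the reflections of H over CA and AB respectively. Then the angle ∠B'AC' equals 2∠BAC. -/
open EuclideanGeometry Real RealInnerProductSpace

private lemma gram2 (x y z : EuclideanSpace ℝ (Fin 2)) :
    ⟪x,x⟫ * (⟪y,y⟫*⟪z,z⟫ - ⟪y,z⟫^2) - ⟪x,y⟫*(⟪x,y⟫*⟪z,z⟫ - ⟪y,z⟫*⟪x,z⟫)
      + ⟪x,z⟫*(⟪x,y⟫*⟪y,z⟫ - ⟪y,y⟫*⟪x,z⟫) = (0:ℝ) := by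
  simp only [PiLp.inner_apply, RCLike.inner_apply, conj_trivial, Fin.sum_univ_two]
  ring

private lemma expand2 (x y z : EuclideanSpace ℝ (Fin 2)) (s t : ℝ) :
    ⟪s • x - z, t • y - z⟫ = s*t*⟪x,y⟫ - s*⟪x,z⟫ - t*⟪y,z⟫ + ⟪z,z⟫ := by
  simp only [PiLp.inner_apply, RCLike.inner_apply, conj_trivial, Fin.sum_univ_two,
    PiLp.sub_apply, PiLp.smul_apply, smul_eq_mul]
  ring

private lemma proj_eq' {V P : Type*} [NormedAddCommGroup V] [InnerProductSpace ℝ V]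
    [MetricSpace P] [NormedAddTorsor V P] {s : AffineSubspace ℝ P} [Nonempty s]
    [s.direction.HasOrthogonalProjection] {p q : P} (hq : q ∈ s)
    (ho : p -ᵥ q ∈ s.directionᗮ) :
    (EuclideanGeometry.orthogonalProjection s p : P) = q := by
  have h := EuclideanGeometry.inter_eq_singleton_orthogonalProjection (s := s) p
  have hmem : q ∈ (s : Set P) ∩ AffineSubspace.mk' p s.directionᗮ := by
    refine ⟨hq, AffineSubspace.mem_mk'.2 ?_⟩
    rw [← neg_vsub_eq_vsub_rev]
    exact Submodule.neg_mem _ ho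
  rw [h] at hmem
  exact (Set.mem_singleton_iff.mp hmem).symm

set_option maxHeartbeats 1000000 in
theorem stmt2
    (A B C H B' C' : EuclideanSpace ℝ (Fin 2))

    (hacute : ∠ C A B < π / 2 ∧ ∠ A B C < π / 2 ∧ ∠ B C A < π / 2)
    (hH₁ : ⟪A - H, B - C⟫ = (0:ℝ)) (hH₂ : ⟪B - H, C - A⟫ = (0:ℝ))
    (hH₃ : ⟪C - H, A - B⟫ = (0:ℝ))
    (hB' : B' = EuclideanGeometry.reflection (affineSpan ℝ {C, A}) H)
    (hC' : C' = EuclideanGeometry.reflection (affineSpan ℝ {A, B}) H) :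
    ∠ B' A C' = 2 * ∠ B A C := by
  obtain ⟨hA1, -, -⟩ := hacute
  set b : EuclideanSpace ℝ (Fin 2) := B - A with hb
  set c : EuclideanSpace ℝ (Fin 2) := C - A with hc
  set h : EuclideanSpace ℝ (Fin 2) := H - A with hh
  set k : ℝ := ⟪b, c⟫ with hk
  -- orthocenter relations
  have hhc : ⟪h, c⟫ = k := by
    have e1 : B - H = b - h := by rw [hb, hh]; abel
    rw [e1, inner_sub_left] at hH₂
    rw [hk]
    linarith
  have hhb : ⟪h, b⟫ = k := by
    have e1 : C - H = c - h := by rw [hc, hh]; abel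
    have e2 : A - B = -b := by rw [hb]; abel
    rw [e1, e2, inner_sub_left, inner_neg_right, inner_neg_right] at hH₃
    rw [hk]
    linarith [real_inner_comm c b]
  -- the angle at A as an angle between vectors
  have gCAB : ∠ C A B = InnerProductGeometry.angle c b := rfl
  -- nondegeneracy
  have hc0 : c ≠ 0 := by
    intro h0
    rw [gCAB, h0, InnerProductGeometry.angle_zero_left] at hA1
    linarith
  have hb0 : b ≠ 0 := by
    intro h0
    rw [gCAB, h0, InnerProductGeometry.angle_zero_right] at hA1
    linarith
  have hh0 : h ≠ 0 := by
    intro h0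
    have hk0 : k = 0 := by rw [← hhb, h0, inner_zero_left]
    have : InnerProductGeometry.angle c b = π / 2 :=
      InnerProductGeometry.inner_eq_zero_iff_angle_eq_pi_div_two c b |>.1
        (by rw [real_inner_comm, ← hk, hk0])
    rw [gCAB, this] at hA1; linarith
  have hnb : (0:ℝ) < ‖b‖ := norm_pos_iff.2 hb0
  have hnc : (0:ℝ) < ‖c‖ := norm_pos_iff.2 hc0
  have hnh : (0:ℝ) < ‖h‖ := norm_pos_iff.2 hh0
  set tc : ℝ := k / ‖c‖ ^ 2 with htc
  set tb : ℝ := k / ‖b‖ ^ 2 with htb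
  -- membership of A, B, C in the spans
  have hAmemCA : A ∈ affineSpan ℝ ({C, A} : Set (EuclideanSpace ℝ (Fin 2))) :=
    mem_affineSpan ℝ (by simp)
  have hCmemCA : C ∈ affineSpan ℝ ({C, A} : Set (EuclideanSpace ℝ (Fin 2))) :=
    mem_affineSpan ℝ (by simp)
  have hAmemAB : A ∈ affineSpan ℝ ({A, B} : Set (EuclideanSpace ℝ (Fin 2))) :=
    mem_affineSpan ℝ (by simp)
  have hBmemAB : B ∈ affineSpan ℝ ({A, B} : Set (EuclideanSpace ℝ (Fin 2))) :=
    mem_affineSpan ℝ (by simp)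
  -- the two projections
  have hprojB : (EuclideanGeometry.orthogonalProjection (affineSpan ℝ {C, A}) H :
      EuclideanSpace ℝ (Fin 2)) = tc • c + A := by
    apply proj_eq'
    · have := AffineSubspace.smul_vsub_vadd_mem (affineSpan ℝ {C, A}) tc hCmemCA hAmemCA hAmemCA
      simpa [vsub_eq_sub, vadd_eq_add, ← hc] using this
    · rw [direction_affineSpan, vectorSpan_pair]
      rw [Submodule.mem_orthogonal_singleton_iff_inner_right]
      have : (C : EuclideanSpace ℝ (Fin 2)) -ᵥ A = c := by simp [vsub_eq_sub, hc]
      rw [this]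
      have e1 : H -ᵥ (tc • c + A) = h - tc • c := by
        simp only [vsub_eq_sub, hh]; abel
      rw [e1, inner_sub_right, inner_smul_right, real_inner_comm h c, hhc,
        real_inner_self_eq_norm_sq, htc]
      field_simp
      ring
  have hprojC : (EuclideanGeometry.orthogonalProjection (affineSpan ℝ {A, B}) H :
      EuclideanSpace ℝ (Fin 2)) = tb • b + A := by
    apply proj_eq'
    · have := AffineSubspace.smul_vsub_vadd_mem (affineSpan ℝ {A, B}) tb hBmemAB hAmemAB hAmemAB
      simpa [vsub_eq_sub, vadd_eq_add, ← hb] using this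
    · rw [direction_affineSpan, vectorSpan_pair]
      rw [Submodule.mem_orthogonal_singleton_iff_inner_right]
      have : (A : EuclideanSpace ℝ (Fin 2)) -ᵥ B = -b := by rw [vsub_eq_sub, hb, neg_sub]
      rw [this]
      have e1 : H -ᵥ (tb • b + A) = h - tb • b := by
        simp only [vsub_eq_sub, hh]; abel
      rw [inner_neg_left, e1, inner_sub_right, inner_smul_right, real_inner_comm h b, hhb,
        real_inner_self_eq_norm_sq, htb]
      field_simp
      ring
  -- the reflected points
  have hB'A : B' - A = (2 * tc) • c - h := by
    rw [hB', EuclideanGeometry.reflection_apply', hprojB]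
    simp only [vsub_eq_sub, vadd_eq_add, hh]
    rw [two_mul, add_smul]
    abel
  have hC'A : C' - A = (2 * tb) • b - h := by
    rw [hC', EuclideanGeometry.reflection_apply', hprojC]
    simp only [vsub_eq_sub, vadd_eq_add, hh]
    rw [two_mul, add_smul]
    abel
  -- norms of the reflected vectors
  have hnB' : ‖B' - A‖ = ‖h‖ := by
    have := EuclideanGeometry.dist_reflection_eq_of_mem (affineSpan ℝ {C, A}) hAmemCA H
    rw [← hB'] at this
    rw [show B' - A = -(A - B') by abel, norm_neg, ← dist_eq_norm, this, dist_eq_norm,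
      show A - H = -h by rw [hh]; abel, norm_neg]
  have hnC' : ‖C' - A‖ = ‖h‖ := by
    have := EuclideanGeometry.dist_reflection_eq_of_mem (affineSpan ℝ {A, B}) hAmemAB H
    rw [← hC'] at this
    rw [show C' - A = -(A - C') by abel, norm_neg, ← dist_eq_norm, this, dist_eq_norm,
      show A - H = -h by rw [hh]; abel, norm_neg]
  -- Gram determinant identity (dimension 2)
  have G : ‖h‖^2*(‖b‖^2*‖c‖^2 - k^2) - k*(k*‖c‖^2 - k*k) + k*(k*k - ‖b‖^2*k) = 0 := by
    have := gram2 h b c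
    rw [hhb, hhc, ← hk, real_inner_self_eq_norm_sq, real_inner_self_eq_norm_sq,
      real_inner_self_eq_norm_sq] at this
    linarith [this]
  -- reduce to equality of cosines
  have g1 : ∠ B' A C' = InnerProductGeometry.angle (B' - A) (C' - A) := rfl
  have g2 : ∠ B A C = InnerProductGeometry.angle b c := rfl
  rw [g1, g2]
  have hθ : InnerProductGeometry.angle b c < π / 2 := by
    rw [gCAB, InnerProductGeometry.angle_comm] at hA1; exact hA1
  apply Real.injOn_cos
  · exact ⟨InnerProductGeometry.angle_nonneg _ _, InnerProductGeometry.angle_le_pi _ _⟩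
  · constructor
    · have := InnerProductGeometry.angle_nonneg b c; linarith
    · linarith
  have e3 : ⟪c, b⟫ = k := (real_inner_comm c b).symm.trans hk.symm
  have e4 : ⟪c, h⟫ = k := (real_inner_comm c h).symm.trans hhc
  have e5 : ⟪b, h⟫ = k := (real_inner_comm b h).symm.trans hhb
  have e6 : ⟪h, h⟫ = ‖h‖^2 := real_inner_self_eq_norm_sq h
  have hinner : ⟪(2 * tc) • c - h, (2 * tb) • b - h⟫ =
      (2*tc)*(2*tb)*k - (2*tc)*k - (2*tb)*k + ‖h‖^2 := by
    rw [expand2, e3, e4, e5, e6]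
  rw [Real.cos_two_mul, InnerProductGeometry.cos_angle, InnerProductGeometry.cos_angle,
    hnB', hnC', hB'A, hC'A, hinner, htc, htb, show (⟪b, c⟫ : ℝ) = k from hk.symm]
  have hbne : (‖b‖:ℝ) ≠ 0 := ne_of_gt hnb
  have hcne : (‖c‖:ℝ) ≠ 0 := ne_of_gt hnc
  have hhne : (‖h‖:ℝ) ≠ 0 := ne_of_gt hnh
  field_simp
  linear_combination 2 * G
end

section
/- Let ABC be an acute triangle inscribed in a circle of radius R with orthocenter H, and let B', C' be the reflections of H over CA and AB respectively. Then the length B'C' = 2R·sin(2A), where A = ∠BAC. -/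
open EuclideanGeometry Real RealInnerProductSpace

noncomputable instance : Fact (Module.finrank ℝ (EuclideanSpace ℝ (Fin 2)) = 2) := ⟨by simp⟩
noncomputable instance : Module.Oriented ℝ (EuclideanSpace ℝ (Fin 2)) (Fin 2) :=
  ⟨Module.Basis.orientation (EuclideanSpace.basisFun (Fin 2) ℝ).toBasis⟩

lemma oangle_reflection' (s : AffineSubspace ℝ (EuclideanSpace ℝ (Fin 2))) [Nonempty s]
    [s.direction.HasOrthogonalProjection] (hs : Module.finrank ℝ s.direction = 1)
    (p₁ p₂ p₃ : EuclideanSpace ℝ (Fin 2)) :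
    ∡ (EuclideanGeometry.reflection s p₁) (EuclideanGeometry.reflection s p₂)
      (EuclideanGeometry.reflection s p₃) = - ∡ p₁ p₂ p₃ := by
  set o := (Module.Oriented.positiveOrientation : Orientation ℝ (EuclideanSpace ℝ (Fin 2)) (Fin 2))
  set f : EuclideanSpace ℝ (Fin 2) ≃ₗᵢ[ℝ] EuclideanSpace ℝ (Fin 2) := Submodule.reflection s.direction
  have hdet : LinearMap.det (f.toLinearEquiv : EuclideanSpace ℝ (Fin 2) →ₗ[ℝ] EuclideanSpace ℝ (Fin 2)) < 0 := by
    have h2 : Module.finrank ℝ (EuclideanSpace ℝ (Fin 2)) = 2 := by simp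
    have horth : Module.finrank ℝ s.directionᗮ = 1 := by
      have := Submodule.finrank_add_finrank_orthogonal (K := s.direction)
      omega
    have := Submodule.linearEquiv_det_reflection s.direction
    rw [horth] at this
    have hd := Submodule.det_reflection s.direction
    rw [horth] at hd
    rw [show (f.toLinearEquiv : EuclideanSpace ℝ (Fin 2) →ₗ[ℝ] EuclideanSpace ℝ (Fin 2))
        = (Submodule.reflection s.direction).toLinearMap from rfl, hd]
    norm_num
  have hmap : Orientation.map (Fin 2) f.toLinearEquiv o = -o :=
    (o.map_eq_neg_iff_det_neg f.toLinearEquiv (by simp)).2 hdet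
  have key : ∀ x y : EuclideanSpace ℝ (Fin 2), o.oangle (f x) (f y) = - o.oangle x y := by
    intro x y
    have h1 := Orientation.oangle_map (f x) (f y) f (o := o)
    rw [hmap, Orientation.oangle_neg_orientation_eq_neg, f.symm_apply_apply,
      f.symm_apply_apply] at h1
    rw [← h1, neg_neg]
  have hv : ∀ p q : EuclideanSpace ℝ (Fin 2),
      EuclideanGeometry.reflection s p -ᵥ EuclideanGeometry.reflection s q = f (p -ᵥ q) := by
    intro p q
    rw [← (EuclideanGeometry.reflection s).map_vsub]
    congr 1
  show o.oangle _ _ = - o.oangle _ _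
  rw [hv, hv, key]

lemma coe_angle_ne_zero (x : ℝ) (h1 : 0 < x) (h2 : x < π) : (x : Real.Angle) ≠ 0 := by
  rw [← Real.Angle.coe_zero, Ne, Real.Angle.angle_eq_iff_two_pi_dvd_sub]
  rintro ⟨k, hk⟩
  have hπ := Real.pi_pos
  rcases le_or_gt k 0 with hkk | hkk
  · have hk0 : (k : ℝ) ≤ 0 := by exact_mod_cast hkk
    nlinarith
  · have hk1 : (1 : ℝ) ≤ (k : ℝ) := by exact_mod_cast hkk
    nlinarith

theorem stmt4
    (A B C H B' C' O : EuclideanSpace ℝ (Fin 2))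
 (R : ℝ)
    (hacute : ∠ C A B < π / 2 ∧ ∠ A B C < π / 2 ∧ ∠ B C A < π / 2)
    (hH₁ : ⟪A - H, B - C⟫ = (0:ℝ)) (hH₂ : ⟪B - H, C - A⟫ = (0:ℝ))
    (hH₃ : ⟪C - H, A - B⟫ = (0:ℝ))
    (hO : dist O A = R ∧ dist O B = R ∧ dist O C = R)
    (hB' : B' = EuclideanGeometry.reflection (affineSpan ℝ {C, A}) H)
    (hC' : C' = EuclideanGeometry.reflection (affineSpan ℝ {A, B}) H) :
    dist B' C' = 2 * R * Real.sin (2 * ∠ B A C) := by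
  obtain ⟨ha, hb, hc⟩ := hacute
  obtain ⟨hOA, hOB, hOC⟩ := hO
  have hpi : (0:ℝ) < π / 2 := by positivity
  -- distinctness
  have hBA : B ≠ A := by
    rintro rfl
    rw [EuclideanGeometry.angle, vsub_self, InnerProductGeometry.angle_zero_right] at ha
    linarith
  have hCA : C ≠ A := by
    rintro rfl
    rw [EuclideanGeometry.angle, vsub_self, InnerProductGeometry.angle_zero_left] at ha
    linarith
  have hCB : C ≠ B := by
    rintro rfl
    rw [EuclideanGeometry.angle, vsub_self, InnerProductGeometry.angle_zero_right] at hb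
    linarith
  have hsum := EuclideanGeometry.angle_add_angle_add_angle_eq_pi (p₁ := A) (p₂ := B) C
    hBA
  have hCABpos : 0 < ∠ C A B := by
    have h1 := EuclideanGeometry.angle_nonneg A B C
    have h2 := EuclideanGeometry.angle_nonneg B C A
    linarith
  have hHA : H ≠ A := by
    rintro rfl
    have : InnerProductGeometry.angle (B - H) (C - H) = π / 2 :=
      InnerProductGeometry.inner_eq_zero_iff_angle_eq_pi_div_two _ _ |>.1 hH₂
    rw [InnerProductGeometry.angle_comm] at this
    rw [EuclideanGeometry.angle, show C -ᵥ H = C - H from rfl,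
      show B -ᵥ H = B - H from rfl, this] at ha
    linarith
  -- noncollinearity and triangle
  have hncol : ¬ Collinear ℝ ({C, A, B} : Set (EuclideanSpace ℝ (Fin 2))) := by
    intro hcol
    rcases EuclideanGeometry.collinear_iff_eq_or_eq_or_angle_eq_zero_or_angle_eq_pi.1 hcol with
      h | h | h | h
    · exact hCA h
    · exact hBA h
    · linarith
    · linarith
  have hind : AffineIndependent ℝ ![A, B, C] := by
    rw [affineIndependent_iff_not_collinear_set]
    intro hcol
    exact hncol (hcol.subset (by intro x hx; simp at hx ⊢; tauto))
  set t : Affine.Triangle ℝ (EuclideanSpace ℝ (Fin 2)) := ⟨![A, B, C], hind⟩ with ht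
  have htp0 : t.points 0 = A := rfl
  have htp1 : t.points 1 = B := rfl
  have htp2 : t.points 2 = C := rfl
  have hspan : affineSpan ℝ (Set.range t.points) = ⊤ := by
    rw [AffineIndependent.affineSpan_eq_top_iff_card_eq_finrank_add_one t.independent]
    simp
  -- circumcenter and circumradius
  have hOc : O = t.circumcenter := by
    refine t.eq_circumcenter_of_dist_eq (hspan ▸ AffineSubspace.mem_top ℝ _ O) (r := R) ?_
    intro i
    fin_cases i
    · rw [htp0] at *; rw [dist_comm]; exact hOA
    · rw [dist_comm]; exact hOB
    · rw [dist_comm]; exact hOC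
  have hRc : R = t.circumradius := by
    refine t.eq_circumradius_of_dist_eq (hspan ▸ AffineSubspace.mem_top ℝ _ O) ?_
    intro i
    fin_cases i
    · rw [dist_comm]; exact hOA
    · rw [dist_comm]; exact hOB
    · rw [dist_comm]; exact hOC
  -- orthocenter
  have hmem : ∀ (i : Fin 3) (P₁ P₂ P₃ : EuclideanSpace ℝ (Fin 2)),
      t.points '' ↑(Finset.univ.erase i) = {P₂, P₃} → t.points i = P₁ →
      ⟪P₂ - P₃, H - P₁⟫ = (0:ℝ) → H ∈ t.altitude i := by
    intro i P₁ P₂ P₃ himg hpt hinner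
    rw [Affine.Simplex.altitude_def]
    refine (AffineSubspace.mem_inf_iff _ _ _).2 ⟨?_, hspan ▸ AffineSubspace.mem_top ℝ _ H⟩
    have himg' : t.points '' ({i}ᶜ : Set (Fin 3)) = {P₂, P₃} := by
      rw [← himg]; congr 1; ext; simp
    rw [AffineSubspace.mem_mk', himg', hpt, direction_affineSpan, vectorSpan_pair]
    rw [Submodule.mem_orthogonal_singleton_iff_inner_right]
    exact hinner
  have himg : ∀ (i j k : Fin 3), Finset.univ.erase i = {j, k} →
      t.points '' ↑(Finset.univ.erase i) = {t.points j, t.points k} := by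
    intro i j k hjk
    rw [hjk]
    simp [Set.image_pair]
  have hH0 : H ∈ t.altitude 0 := by
    refine hmem 0 A B C (by rw [himg 0 1 2 (by decide)]; rfl) htp0 ?_
    have h := hH₁
    rw [real_inner_comm, ← neg_sub H A, inner_neg_right, neg_eq_zero] at h
    exact h
  have hH1 : H ∈ t.altitude 1 := by
    refine hmem 1 B C A (by rw [himg 1 2 0 (by decide)]; rfl) htp1 ?_
    have h := hH₂
    rw [real_inner_comm, ← neg_sub H B, inner_neg_right, neg_eq_zero] at h
    exact h
  have hHo : H = t.orthocenter :=
    Affine.Triangle.eq_orthocenter_of_forall_mem_altitude (i₁ := 0) (i₂ := 1)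
      (by decide) hH0 hH1
  -- reflections fixed points and isometry facts
  have hACA : A ∈ affineSpan ℝ ({C, A} : Set (EuclideanSpace ℝ (Fin 2))) :=
    subset_affineSpan ℝ _ (by simp)
  have hCCA : C ∈ affineSpan ℝ ({C, A} : Set (EuclideanSpace ℝ (Fin 2))) :=
    subset_affineSpan ℝ _ (by simp)
  have hAAB : A ∈ affineSpan ℝ ({A, B} : Set (EuclideanSpace ℝ (Fin 2))) :=
    subset_affineSpan ℝ _ (by simp)
  have hBAB : B ∈ affineSpan ℝ ({A, B} : Set (EuclideanSpace ℝ (Fin 2))) :=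
    subset_affineSpan ℝ _ (by simp)
  have rACA : EuclideanGeometry.reflection (affineSpan ℝ {C, A}) A = A :=
    (EuclideanGeometry.reflection_eq_self_iff A).2 hACA
  have rCCA : EuclideanGeometry.reflection (affineSpan ℝ {C, A}) C = C :=
    (EuclideanGeometry.reflection_eq_self_iff C).2 hCCA
  have rAAB : EuclideanGeometry.reflection (affineSpan ℝ {A, B}) A = A :=
    (EuclideanGeometry.reflection_eq_self_iff A).2 hAAB
  have rBAB : EuclideanGeometry.reflection (affineSpan ℝ {A, B}) B = B :=
    (EuclideanGeometry.reflection_eq_self_iff B).2 hBAB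
  -- B' and C' lie on the circumcircle
  have hOB' : dist O B' = R := by
    have key := t.dist_orthocenter_reflection_circumcenter (i₁ := 2) (i₂ := 0) (by decide)
    have hseq : affineSpan ℝ (t.points '' {2, 0}) =
        affineSpan ℝ ({C, A} : Set (EuclideanSpace ℝ (Fin 2))) := by
      rw [Set.image_pair, htp2, htp0]
    rw [EuclideanGeometry.eq_reflection_of_eq_subspace hseq, ← hHo, ← hOc, ← hRc] at key
    calc dist O B' = dist (EuclideanGeometry.reflection (affineSpan ℝ {C, A}) O)
          (EuclideanGeometry.reflection (affineSpan ℝ {C, A}) B') :=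
        ((EuclideanGeometry.reflection (affineSpan ℝ {C, A})).dist_map O B').symm
      _ = dist H (EuclideanGeometry.reflection (affineSpan ℝ {C, A}) O) := by
        rw [hB', EuclideanGeometry.reflection_reflection, dist_comm]
      _ = R := key
  have hOC' : dist O C' = R := by
    have key := t.dist_orthocenter_reflection_circumcenter (i₁ := 0) (i₂ := 1) (by decide)
    have hseq : affineSpan ℝ (t.points '' {0, 1}) =
        affineSpan ℝ ({A, B} : Set (EuclideanSpace ℝ (Fin 2))) := by
      rw [Set.image_pair, htp0, htp1]
    rw [EuclideanGeometry.eq_reflection_of_eq_subspace hseq, ← hHo, ← hOc, ← hRc] at key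
    calc dist O C' = dist (EuclideanGeometry.reflection (affineSpan ℝ {A, B}) O)
          (EuclideanGeometry.reflection (affineSpan ℝ {A, B}) C') :=
        ((EuclideanGeometry.reflection (affineSpan ℝ {A, B})).dist_map O C').symm
      _ = dist H (EuclideanGeometry.reflection (affineSpan ℝ {A, B}) O) := by
        rw [hC', EuclideanGeometry.reflection_reflection, dist_comm]
      _ = R := key
  -- distances from A
  have hAB' : dist A B' = dist A H := by
    have h := (EuclideanGeometry.reflection (affineSpan ℝ ({C, A} :
      Set (EuclideanSpace ℝ (Fin 2))))).dist_map A H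
    rw [rACA, ← hB'] at h
    exact h
  have hAC' : dist A C' = dist A H := by
    have h := (EuclideanGeometry.reflection (affineSpan ℝ ({A, B} :
      Set (EuclideanSpace ℝ (Fin 2))))).dist_map A H
    rw [rAAB, ← hC'] at h
    exact h
  have hB'A : B' ≠ A := by
    intro h
    apply hHA
    have : dist A H = 0 := by rw [← hAB', h, dist_self]
    rw [dist_eq_zero] at this
    exact this.symm ▸ rfl
  have hC'A : C' ≠ A := by
    intro h
    apply hHA
    have : dist A H = 0 := by rw [← hAC', h, dist_self]
    rw [dist_eq_zero] at this
    exact this.symm ▸ rfl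
  -- dimensions of the mirror lines
  have hdCA : Module.finrank ℝ (affineSpan ℝ ({C, A} : Set (EuclideanSpace ℝ (Fin 2)))).direction
      = 1 := by
    rw [direction_affineSpan, vectorSpan_pair]
    exact finrank_span_singleton (vsub_ne_zero.2 hCA)
  have hdAB : Module.finrank ℝ (affineSpan ℝ ({A, B} : Set (EuclideanSpace ℝ (Fin 2)))).direction
      = 1 := by
    rw [direction_affineSpan, vectorSpan_pair]
    exact finrank_span_singleton (vsub_ne_zero.2 (Ne.symm hBA))
  -- oriented angle computation
  have e1 : ∡ B' A C = - ∡ H A C := by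
    have h := oangle_reflection' _ hdCA H A C
    rw [rACA, rCCA, ← hB'] at h
    exact h
  have e2 : ∡ B A C' = - ∡ B A H := by
    have h := oangle_reflection' _ hdAB B A H
    rw [rAAB, rBAB, ← hC'] at h
    exact h
  have add3 : ∡ C A H + ∡ H A B = ∡ C A B := EuclideanGeometry.oangle_add hCA hHA hBA
  have add2 : ∡ C A B + ∡ B A C' = ∡ C A C' := EuclideanGeometry.oangle_add hCA hBA hC'A
  have add1 : ∡ B' A C + ∡ C A C' = ∡ B' A C' := EuclideanGeometry.oangle_add hB'A hCA hC'A
  have main : ∡ B' A C' = ∡ C A B + ∡ C A B := by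
    rw [← add1, ← add2, e1, e2, ← add3, EuclideanGeometry.oangle_rev C A H,
      EuclideanGeometry.oangle_rev B A H]
    abel
  -- the unoriented angle
  set θ := ∠ C A B with hθ
  have hθlt : θ < π / 2 := ha
  have h2θpos : 0 < 2 * θ := by linarith
  have h2θlt : 2 * θ < π := by linarith
  have hsinpos : 0 < Real.sin (2 * θ) := Real.sin_pos_of_pos_of_lt_pi h2θpos h2θlt
  have hcases := EuclideanGeometry.oangle_eq_angle_or_eq_neg_angle hCA hBA
  have hBAC' : ∡ B' A C' = ((2 * θ : ℝ) : Real.Angle) ∨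
      ∡ B' A C' = ((-(2 * θ) : ℝ) : Real.Angle) := by
    rcases hcases with h | h
    · left
      rw [main, h, ← Real.Angle.coe_add]
      congr 1
      ring
    · right
      rw [main, h, ← Real.Angle.coe_neg, ← Real.Angle.coe_add]
      congr 1
      ring
  have hsinabs : |Real.Angle.sin (∡ B' A C')| = Real.sin (2 * θ) := by
    rcases hBAC' with h | h <;> rw [h, Real.Angle.sin_coe]
    · rw [abs_of_pos hsinpos]
    · rw [Real.sin_neg, abs_neg, abs_of_pos hsinpos]
  have hB'C' : B' ≠ C' := by
    intro h
    have h0 : ∡ B' A C' = 0 := by rw [h]; exact EuclideanGeometry.oangle_self_left_right _ _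
    have hne := coe_angle_ne_zero (2 * θ) h2θpos h2θlt
    rcases hBAC' with hh | hh <;> rw [h0] at hh
    · exact hne hh.symm
    · rw [Real.Angle.coe_neg, eq_comm, neg_eq_zero] at hh
      exact hne hh
  -- law of sines on the circumcircle
  set sph : EuclideanGeometry.Sphere (EuclideanSpace ℝ (Fin 2)) := ⟨O, R⟩ with hsph
  have hAs : A ∈ sph := EuclideanGeometry.mem_sphere.2 (by rw [dist_comm]; exact hOA)
  have hB's : B' ∈ sph := EuclideanGeometry.mem_sphere.2 (by rw [dist_comm]; exact hOB')
  have hC's : C' ∈ sph := EuclideanGeometry.mem_sphere.2 (by rw [dist_comm]; exact hOC')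
  have law := EuclideanGeometry.Sphere.dist_div_sin_oangle_eq_two_mul_radius hB's hAs hC's
    hB'A hB'C' (Ne.symm hC'A)
  rw [hsinabs] at law
  have hfin : dist B' C' = 2 * R * Real.sin (2 * θ) := by
    have h2 := (div_eq_iff (ne_of_gt hsinpos)).1 law
    linarith [h2]
  rw [EuclideanGeometry.angle_comm B A C]
  exact hfin
end

section
/- Let ABC be an acute triangle with orthocenter H, let A', B', C' be the reflections of H over BC, CA, AB, and let X be the reflection of A over the line B'C'. Then the distance AX = 2·AH·cos(∠BAC). -/
open EuclideanGeometry Real RealInnerProductSpace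

local notation "E" => EuclideanSpace ℝ (Fin 2)

-- characterization of orthogonal projection
lemma proj_char {s : AffineSubspace ℝ E} [Nonempty s]
    [s.direction.HasOrthogonalProjection] {p q : E} (hq : q ∈ s)
    (hperp : q - p ∈ s.directionᗮ) :
    (EuclideanGeometry.orthogonalProjection s p : E) = q := by
  have h := EuclideanGeometry.inter_eq_singleton_orthogonalProjection (s := s) p
  have hq2 : q ∈ (s : Set E) ∩ AffineSubspace.mk' p s.directionᗮ :=
    ⟨hq, by
      show q ∈ AffineSubspace.mk' p s.directionᗮ
      rwa [AffineSubspace.mem_mk', vsub_eq_sub]⟩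
  rw [h] at hq2
  exact hq2.symm

lemma span_pair_nonempty (P Q : E) : Nonempty (affineSpan ℝ ({P, Q} : Set E)) :=
  ⟨⟨P, subset_affineSpan _ _ (by simp)⟩⟩

lemma proj_line (P Q Z : E) (h : P ≠ Q) :
    (EuclideanGeometry.orthogonalProjection (affineSpan ℝ ({P, Q} : Set E)) Z : E)
      = (⟪Z - P, Q - P⟫ / ‖Q - P‖^2) • (Q - P) + P := by
  haveI := span_pair_nonempty P Q
  set t : ℝ := ⟪Z - P, Q - P⟫ / ‖Q - P‖^2 with ht
  apply proj_char
  · have := AffineMap.lineMap_mem_affineSpan_pair (k := ℝ) t P Q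
    simpa [AffineMap.lineMap_apply, vsub_eq_sub, vadd_eq_add] using this
  · rw [direction_affineSpan, vectorSpan_pair]
    rw [Submodule.mem_orthogonal_singleton_iff_inner_right]
    have hQP : ‖Q - P‖^2 ≠ 0 := by
      simpa [sub_eq_zero] using fun hh => h (by
        have : Q - P = 0 := by simpa [sub_eq_zero] using hh
        exact ((sub_eq_zero.mp this).symm))
    have : ⟪Q - P, t • (Q - P) + P - Z⟫ = t * ‖Q - P‖^2 - ⟪Z - P, Q - P⟫ := by
      rw [← real_inner_self_eq_norm_sq]
      simp only [PiLp.inner_apply, RCLike.inner_apply, conj_trivial, Fin.sum_univ_two,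
        PiLp.sub_apply, PiLp.add_apply, PiLp.smul_apply, smul_eq_mul]
      ring
    have h2 : ⟪P -ᵥ Q, t • (Q - P) + P - Z⟫ = -(⟪Q - P, t • (Q - P) + P - Z⟫) := by
      rw [vsub_eq_sub, show P - Q = -(Q - P) by abel, inner_neg_left]
    rw [h2, this, ht]
    rw [div_mul_cancel₀ _ hQP]; ring

set_option maxHeartbeats 4000000 in
lemma scalar_key (al be ga k t s : ℝ)
    (ht : t * (al+ga-2*k) = ga - k) (hs : s * (al+be-2*k) = be - k)
    (hgram : al*be*ga + 2*k*k*k - (al+be+ga)*k^2 = 0) :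
    ((1-t-s)^2*al + (s-1)^2*be + (t-1)^2*ga + 2*(1-t-s)*(s-1)*k
      + 2*(1-t-s)*(t-1)*k + 2*(s-1)*(t-1)*k)
      * ((al+be-2*k)*(al+ga-2*k)) * ((al+be-2*k)^2*(al+ga-2*k)^2)
    = al*(al-k)^2 * ((al+be-2*k)^2*(al+ga-2*k)^2) := by
  linear_combination (-96*k^6 + 64*k^6*s + 64*k^6*t + 128*ga*k^5 + -64*ga*k^5*s + -96*ga*k^5*t + -56*ga^2*k^4 + 16*ga^2*k^4*s + 48*ga^2*k^4*t + 8*ga^3*k^3 + -8*ga^3*k^3*t + 144*be*k^5 + -96*be*k^5*s + -96*be*k^5*t + -192*be*ga*k^4 + 96*be*ga*k^4*s + 144*be*ga*k^4*t + 84*be*ga^2*k^3 + -24*be*ga^2*k^3*s + -72*be*ga^2*k^3*t + -12*be*ga^3*k^2 + 12*be*ga^3*k^2*t + -72*be^2*k^4 + 48*be^2*k^4*s + 48*be^2*k^4*t + 96*be^2*ga*k^3 + -48*be^2*ga*k^3*s + -72*be^2*ga*k^3*t + -42*be^2*ga^2*k^2 + 12*be^2*ga^2*k^2*s + 36*be^2*ga^2*k^2*t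 + 6*be^2*ga^3*k + -6*be^2*ga^3*k*t + 12*be^3*k^3 + -8*be^3*k^3*s + -8*be^3*k^3*t + -16*be^3*ga*k^2 + 8*be^3*ga*k^2*s + 12*be^3*ga*k^2*t + 7*be^3*ga^2*k + -2*be^3*ga^2*k*s + -6*be^3*ga^2*k*t + -1*be^3*ga^3 + 1*be^3*ga^3*t + 304*al*k^5 + -224*al*k^5*s + -192*al*k^5*t + -336*al*ga*k^4 + 192*al*ga*k^4*s + 240*al*ga*k^4*t + 116*al*ga^2*k^3 + -40*al*ga^2*k^3*s + -96*al*ga^2*k^3*t + -12*al*ga^3*k^2 + 12*al*ga^3*k^2*t + -384*al*be*k^4 + 288*al*be*k^4*s + 240*al*be*k^4*t + 408*al*be*ga*k^3 + -240*al*be*ga*k^3*s + -288*al*be*ga*k^3*t + -132*al*be*ga^2*k^2 + 48*al*be*ga^2*k^2*s + 108*al*be*ga^2*k^2*t + 12*al*be*ga^3*k + -12*al*be*ga^3*k*t + 156*al*be^2*k^3 + -120*al*be^2*k^3*s + -96*al*be^2*k^3*t + -156*al*be^2*ga*k^2 + 96*al*be^2*ga*k^2*s + 108*al*be^2*ga*k^2*t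 + 45*al*be^2*ga^2*k + -18*al*be^2*ga^2*k*s + -36*al*be^2*ga^2*k*t + -3*al*be^2*ga^3 + 3*al*be^2*ga^3*t + -20*al*be^3*k^2 + 16*al*be^3*k^2*s + 12*al*be^3*k^2*t + 18*al*be^3*ga*k + -12*al*be^3*ga*k*s + -12*al*be^3*ga*k*t + -4*al*be^3*ga^2 + 2*al*be^3*ga^2*s + 3*al*be^3*ga^2*t + -400*al^2*k^4 + 320*al^2*k^4*s + 240*al^2*k^4*t + 352*al^2*ga*k^3 + -224*al^2*ga*k^3*s + -240*al^2*ga*k^3*t + -90*al^2*ga^2*k^2 + 36*al^2*ga^2*k^2*s + 72*al^2*ga^2*k^2*t + 6*al^2*ga^3*k + -6*al^2*ga^3*k*t + 408*al^2*be*k^3 + -336*al^2*be*k^3*s + -240*al^2*be*k^3*t + -324*al^2*be*ga*k^2 + 216*al^2*be*ga*k^2*s + 216*al^2*be*ga*k^2*t + 69*al^2*be*ga^2*k + -30*al^2*be*ga^2*k*s + -54*al^2*be*ga^2*k*t + -3*al^2*be*ga^3 + 3*al^2*be*ga^3*t + -126*al^2*be^2*k^2 + 108*al^2*be^2*k^2*s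 + 72*al^2*be^2*k^2*t + 84*al^2*be^2*ga*k + -60*al^2*be^2*ga*k*s + -54*al^2*be^2*ga*k*t + -12*al^2*be^2*ga^2 + 6*al^2*be^2*ga^2*s + 9*al^2*be^2*ga^2*t + 11*al^2*be^3*k + -10*al^2*be^3*k*s + -6*al^2*be^3*k*t + -5*al^2*be^3*ga + 4*al^2*be^3*ga*s + 3*al^2*be^3*ga*t + 280*al^3*k^3 + -240*al^3*k^3*s + -160*al^3*k^3*t + -184*al^3*ga*k^2 + 128*al^3*ga*k^2*s + 120*al^3*ga*k^2*t + 31*al^3*ga^2*k + -14*al^3*ga^2*k*s + -24*al^3*ga^2*k*t + -1*al^3*ga^3 + 1*al^3*ga^3*t + -216*al^3*be*k^2 + 192*al^3*be*k^2*s + 120*al^3*be*k^2*t + 114*al^3*be*ga*k + -84*al^3*be*ga*k*s + -72*al^3*be*ga*k*t + -12*al^3*be*ga^2 + 6*al^3*be*ga^2*s + 9*al^3*be*ga^2*t + 45*al^3*be^2*k + -42*al^3*be^2*k*s + -24*al^3*be^2*k*t + -15*al^3*be^2*ga + 12*al^3*be^2*ga*s + 9*al^3*be^2*ga*t + -2*al^3*be^3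 + 2*al^3*be^3*s + 1*al^3*be^3*t + -110*al^4*k^2 + 100*al^4*k^2*s + 60*al^4*k^2*t + 48*al^4*ga*k + -36*al^4*ga*k*s + -30*al^4*ga*k*t + -4*al^4*ga^2 + 2*al^4*ga^2*s + 3*al^4*ga^2*t + 57*al^4*be*k + -54*al^4*be*k*s + -30*al^4*be*k*t + -15*al^4*be*ga + 12*al^4*be*ga*s + 9*al^4*be*ga*t + -6*al^4*be^2 + 6*al^4*be^2*s + 3*al^4*be^2*t + 23*al^5*k + -22*al^5*k*s + -12*al^5*k*t + -5*al^5*ga + 4*al^5*ga*s + 3*al^5*ga*t + -6*al^5*be + 6*al^5*be*s + 3*al^5*be*t + -2*al^6 + 2*al^6*s + 1*al^6*t) * ht + (-64*k^6 + 64*k^6*s + 80*ga*k^5 + -96*ga*k^5*s + -32*ga^2*k^4 + 48*ga^2*k^4*s + 4*ga^3*k^3 + -8*ga^3*k^3*s + 96*be*k^5 + -96*be*k^5*s + -128*be*ga*k^4 + 144*be*ga*k^4*s + 56*be*ga^2*k^3 + -72*be*ga^2*k^3*s + -8*be*ga^3*k^2 + 12*be*ga^3*k^2*s + -48*be^2*k^4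 + 48*be^2*k^4*s + 68*be^2*ga*k^3 + -72*be^2*ga*k^3*s + -32*be^2*ga^2*k^2 + 36*be^2*ga^2*k^2*s + 5*be^2*ga^3*k + -6*be^2*ga^3*k*s + 8*be^3*k^3 + -8*be^3*k^3*s + -12*be^3*ga*k^2 + 12*be^3*ga*k^2*s + 6*be^3*ga^2*k + -6*be^3*ga^2*k*s + -1*be^3*ga^3 + 1*be^3*ga^3*s + 208*al*k^5 + -192*al*k^5*s + -208*al*ga*k^4 + 240*al*ga*k^4*s + 60*al*ga^2*k^3 + -96*al*ga^2*k^3*s + -4*al*ga^3*k^2 + 12*al*ga^3*k^2*s + -256*al*be*k^4 + 240*al*be*k^4*s + 264*al*be*ga*k^3 + -288*al*be*ga*k^3*s + -80*al*be*ga^2*k^2 + 108*al*be*ga^2*k^2*s + 6*al*be*ga^3*k + -12*al*be*ga^3*k*s + 100*al*be^2*k^3 + -96*al*be^2*k^3*s + -104*al*be^2*ga*k^2 + 108*al*be^2*ga*k^2*s + 31*al*be^2*ga^2*k + -36*al*be^2*ga^2*k*s + -2*al*be^2*ga^3 + 3*al*be^2*ga^3*s + -12*al*be^3*k^2 + 12*al*be^3*k^2*s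 + 12*al*be^3*ga*k + -12*al*be^3*ga*k*s + -3*al*be^3*ga^2 + 3*al*be^3*ga^2*s + -288*al^2*k^4 + 240*al^2*k^4*s + 224*al^2*ga*k^3 + -240*al^2*ga*k^3*s + -44*al^2*ga^2*k^2 + 72*al^2*ga^2*k^2*s + 1*al^2*ga^3*k + -6*al^2*ga^3*k*s + 280*al^2*be*k^3 + -240*al^2*be*k^3*s + -212*al^2*be*ga*k^2 + 216*al^2*be*ga*k^2*s + 40*al^2*be*ga^2*k + -54*al^2*be*ga^2*k*s + -1*al^2*be*ga^3 + 3*al^2*be*ga^3*s + -80*al^2*be^2*k^2 + 72*al^2*be^2*k^2*s + 55*al^2*be^2*ga*k + -54*al^2*be^2*ga*k*s + -8*al^2*be^2*ga^2 + 9*al^2*be^2*ga^2*s + 6*al^2*be^3*k + -6*al^2*be^3*k*s + -3*al^2*be^3*ga + 3*al^2*be^3*ga*s + 216*al^3*k^3 + -160*al^3*k^3*s + -124*al^3*ga*k^2 + 120*al^3*ga*k^2*s + 15*al^3*ga^2*k + -24*al^3*ga^2*k*s + 1*al^3*ga^3*s + -156*al^3*be*k^2 + 120*al^3*be*k^2*s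 + 78*al^3*be*ga*k + -72*al^3*be*ga*k*s + -7*al^3*be*ga^2 + 9*al^3*be*ga^2*s + 29*al^3*be^2*k + -24*al^3*be^2*k*s + -10*al^3*be^2*ga + 9*al^3*be^2*ga*s + -1*al^3*be^3 + 1*al^3*be^3*s + -92*al^4*k^2 + 60*al^4*k^2*s + 35*al^4*ga*k + -30*al^4*ga*k*s + -2*al^4*ga^2 + 3*al^4*ga^2*s + 44*al^4*be*k + -30*al^4*be*k*s + -11*al^4*be*ga + 9*al^4*be*ga*s + -4*al^4*be^2 + 3*al^4*be^2*s + 21*al^5*k + -12*al^5*k*s + -4*al^5*ga + 3*al^5*ga*s + -5*al^5*be + 3*al^5*be*s + -2*al^6 + 1*al^6*s) * hs + (16*k^4 + -16*ga*k^3 + 4*ga^2*k^2 + -16*be*k^3 + 16*be*ga*k^2 + -4*be*ga^2*k + 4*be^2*k^2 + -4*be^2*ga*k + 1*be^2*ga^2 + -32*al*k^3 + 24*al*ga*k^2 + -4*al*ga^2*k + 24*al*be*k^2 + -16*al*be*ga*k + 2*al*be*ga^2 + -4*al*be^2*k + 2*al*be^2*ga + 24*al^2*k^2 + -12*al^2*ga*k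 + 1*al^2*ga^2 + -12*al^2*be*k + 4*al^2*be*ga + 1*al^2*be^2 + -8*al^3*k + 2*al^3*ga + 2*al^3*be + 1*al^4) * hgram

open EuclideanGeometry Real RealInnerProductSpace

lemma gram_det_coord (u0 u1 v0 v1 w0 w1 : ℝ)
    (h1 : u0*w0 + u1*w1 = u0*v0 + u1*v1) (h2 : v0*w0 + v1*w1 = u0*v0 + u1*v1) :
    (u0*u0+u1*u1)*(v0*v0+v1*v1)*(w0*w0+w1*w1)
      + 2*(u0*v0+u1*v1)*(u0*v0+u1*v1)*(u0*v0+u1*v1)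
      - ((u0*u0+u1*u1)+(v0*v0+v1*v1)+(w0*w0+w1*w1))*(u0*v0+u1*v1)^2 = 0 := by
  linear_combination ((v0*v0+v1*v1)*((u0*w0+u1*w1)+(u0*v0+u1*v1))
      - 2*(u0*v0+u1*v1)*(v0*w0+v1*w1)) * h1
    + ((u0*u0+u1*u1)*((v0*w0+v1*w1)+(u0*v0+u1*v1)) - 2*(u0*v0+u1*v1)^2) * h2

set_option maxHeartbeats 1600000 in
theorem stmt5
    (A B C H A' B' C' X : EuclideanSpace ℝ (Fin 2))

    (hacute : ∠ C A B < π / 2 ∧ ∠ A B C < π / 2 ∧ ∠ B C A < π / 2)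
    (hH₁ : ⟪A - H, B - C⟫ = (0:ℝ)) (hH₂ : ⟪B - H, C - A⟫ = (0:ℝ))
    (hH₃ : ⟪C - H, A - B⟫ = (0:ℝ))
    (hA' : A' = EuclideanGeometry.reflection (affineSpan ℝ {B, C}) H)
    (hB' : B' = EuclideanGeometry.reflection (affineSpan ℝ {C, A}) H)
    (hC' : C' = EuclideanGeometry.reflection (affineSpan ℝ {A, B}) H)
    (hX : X = EuclideanGeometry.reflection (affineSpan ℝ {B', C'}) A) :
    dist A X = 2 * dist A H * Real.cos (∠ B A C) := by
  obtain ⟨hA1, -, -⟩ := hacute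
  -- nondegeneracy
  have hBA : B ≠ A := by
    intro h
    rw [show ∠ C A B = InnerProductGeometry.angle (C -ᵥ A) (B -ᵥ A) from rfl, h] at hA1
    simp [InnerProductGeometry.angle_zero_right] at hA1
  have hCA : C ≠ A := by
    intro h
    rw [show ∠ C A B = InnerProductGeometry.angle (C -ᵥ A) (B -ᵥ A) from rfl, h] at hA1
    simp [InnerProductGeometry.angle_zero_left] at hA1
  -- inner product facts
  have hk1 : ⟪A - H, C - H⟫ = ⟪A - H, B - H⟫ := by
    rw [show B - C = (B - H) - (C - H) by abel, inner_sub_right] at hH₁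
    linarith
  have hk2 : ⟪B - H, C - H⟫ = ⟪A - H, B - H⟫ := by
    rw [show C - A = (C - H) - (A - H) by abel, inner_sub_right] at hH₂
    rw [show ⟪A - H, B - H⟫ = ⟪B - H, A - H⟫ from real_inner_comm _ _]
    linarith
  have hAC : A ≠ C := fun h => hCA h.symm
  have hAB : A ≠ B := fun h => hBA h.symm
  haveI := span_pair_nonempty C A
  haveI := span_pair_nonempty A B
  haveI := span_pair_nonempty B' C'
  -- the feet of the perpendiculars from H
  set t : ℝ := ⟪H - C, A - C⟫ / ‖A - C‖^2 with htdef
  set s : ℝ := ⟪H - B, A - B⟫ / ‖A - B‖^2 with hsdef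
  set Fb : E := t • (A - C) + C with hFb
  set Fc : E := s • (A - B) + B with hFc
  have hFbproj : (EuclideanGeometry.orthogonalProjection (affineSpan ℝ ({C, A} : Set E)) H : E)
      = Fb := proj_line C A H hCA
  haveI := span_pair_nonempty B A
  have hFcproj : (EuclideanGeometry.orthogonalProjection (affineSpan ℝ ({A, B} : Set E)) H : E)
      = Fc := by
    rw [EuclideanGeometry.eq_orthogonalProjection_of_eq_subspace
      (show affineSpan ℝ ({A, B} : Set E) = affineSpan ℝ ({B, A} : Set E) by
        rw [Set.pair_comm]) H]
    exact proj_line B A H hBA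
  -- explicit form of B' and C'
  have hB'v : B' = Fb - H + Fb := by
    rw [hB', EuclideanGeometry.reflection_apply', hFbproj, vsub_eq_sub, vadd_eq_add]
  have hC'v : C' = Fc - H + Fc := by
    rw [hC', EuclideanGeometry.reflection_apply', hFcproj, vsub_eq_sub, vadd_eq_add]
  -- A is equidistant from B', C', H
  have hdB' : dist A B' = dist A H := by
    rw [hB']
    exact EuclideanGeometry.dist_reflection_eq_of_mem _
      (subset_affineSpan ℝ _ (by simp : A ∈ ({C, A} : Set E))) H
  have hdC' : dist A C' = dist A H := by
    rw [hC']
    exact EuclideanGeometry.dist_reflection_eq_of_mem _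
      (subset_affineSpan ℝ _ (by simp : A ∈ ({A, B} : Set E))) H
  -- the midpoint of B'C' is the projection of A onto line B'C'
  set M : E := (2⁻¹ : ℝ) • (B' + C') with hM
  have hMproj : (EuclideanGeometry.orthogonalProjection (affineSpan ℝ ({B', C'} : Set E)) A : E)
      = M := by
    apply proj_char
    · have := AffineMap.lineMap_mem_affineSpan_pair (k := ℝ) (2⁻¹ : ℝ) B' C'
      have heq : (AffineMap.lineMap B' C' (2⁻¹ : ℝ) : E) = M := by
        rw [AffineMap.lineMap_apply]
        simp only [vsub_eq_sub, vadd_eq_add, hM]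
        module
      rwa [heq] at this
    · rw [direction_affineSpan, vectorSpan_pair,
        Submodule.mem_orthogonal_singleton_iff_inner_right]
      have hnorm : ‖B' - A‖ = ‖C' - A‖ := by
        rw [← dist_eq_norm, ← dist_eq_norm, dist_comm B' A, dist_comm C' A, hdB', hdC']
      have h1 : B' -ᵥ C' = (B' - A) - (C' - A) := by rw [vsub_eq_sub]; abel
      have h2 : M - A = (2⁻¹ : ℝ) • ((B' - A) + (C' - A)) := by rw [hM]; module
      rw [h1, h2, inner_sub_left, inner_smul_right, inner_smul_right, inner_add_right,
        inner_add_right, real_inner_self_eq_norm_sq, real_inner_self_eq_norm_sq,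
        real_inner_comm (C' - A) (B' - A), hnorm]
      ring
  -- dist A X = 2 * ‖A - M‖
  have hdAX : dist A X = 2 * ‖A - M‖ := by
    rw [hX, EuclideanGeometry.reflection_apply', hMproj, dist_eq_norm, vsub_eq_sub, vadd_eq_add,
      show A - (M - A + M) = (2:ℝ) • (A - M) by module, norm_smul]
    simp
  -- coordinate versions of the k-equalities
  have hk1c := hk1
  have hk2c := hk2
  simp only [PiLp.inner_apply, RCLike.inner_apply, conj_trivial, Fin.sum_univ_two,
    PiLp.sub_apply] at hk1c hk2c
  -- scalar abbreviations
  set al : ℝ := ⟪A - H, A - H⟫ with hal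
  set be : ℝ := ⟪B - H, B - H⟫ with hbe
  set ga : ℝ := ⟪C - H, C - H⟫ with hga
  set k : ℝ := ⟪A - H, B - H⟫ with hk
  have halc : al = (A 0 - H 0) * (A 0 - H 0) + (A 1 - H 1) * (A 1 - H 1) := by
    rw [hal]; simp only [PiLp.inner_apply, RCLike.inner_apply, conj_trivial, Fin.sum_univ_two,
      PiLp.sub_apply]
  have hbec : be = (B 0 - H 0) * (B 0 - H 0) + (B 1 - H 1) * (B 1 - H 1) := by
    rw [hbe]; simp only [PiLp.inner_apply, RCLike.inner_apply, conj_trivial, Fin.sum_univ_two,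
      PiLp.sub_apply]
  have hgac : ga = (C 0 - H 0) * (C 0 - H 0) + (C 1 - H 1) * (C 1 - H 1) := by
    rw [hga]; simp only [PiLp.inner_apply, RCLike.inner_apply, conj_trivial, Fin.sum_univ_two,
      PiLp.sub_apply]
  have hkc : k = (A 0 - H 0) * (B 0 - H 0) + (A 1 - H 1) * (B 1 - H 1) := by
    rw [hk]; simp only [PiLp.inner_apply, RCLike.inner_apply, conj_trivial, Fin.sum_univ_two,
      PiLp.sub_apply]; ring
  -- norm and inner facts
  have nAB : ‖B - A‖^2 = al + be - 2*k := by
    rw [← real_inner_self_eq_norm_sq, halc, hbec, hkc]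
    simp only [PiLp.inner_apply, RCLike.inner_apply, conj_trivial, Fin.sum_univ_two,
      PiLp.sub_apply]
    ring
  have nAC : ‖A - C‖^2 = al + ga - 2*k := by
    rw [← real_inner_self_eq_norm_sq, halc, hgac, hkc]
    simp only [PiLp.inner_apply, RCLike.inner_apply, conj_trivial, Fin.sum_univ_two,
      PiLp.sub_apply]
    linear_combination -2 * hk1c
  have nBAC : ⟪B - A, C - A⟫ = al - k := by
    rw [halc, hkc]
    simp only [PiLp.inner_apply, RCLike.inner_apply, conj_trivial, Fin.sum_univ_two,
      PiLp.sub_apply]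
    linear_combination hk2c - hk1c
  have hHC : ⟪H - C, A - C⟫ = ga - k := by
    rw [hgac, hkc]
    simp only [PiLp.inner_apply, RCLike.inner_apply, conj_trivial, Fin.sum_univ_two,
      PiLp.sub_apply]
    linear_combination -hk1c
  have hHB : ⟪H - B, A - B⟫ = be - k := by
    rw [hbec, hkc]
    simp only [PiLp.inner_apply, RCLike.inner_apply, conj_trivial, Fin.sum_univ_two,
      PiLp.sub_apply]
    ring
  have hgram : al*be*ga + 2*k*k*k - (al+be+ga)*k^2 = 0 := by
    rw [halc, hbec, hgac, hkc]
    linear_combination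
      gram_det_coord (A 0 - H 0) (A 1 - H 1) (B 0 - H 0) (B 1 - H 1) (C 0 - H 0) (C 1 - H 1)
        (by linear_combination hk1c) (by linear_combination hk2c)
  -- nonvanishing denominators
  have hD2' : ‖A - C‖^2 ≠ 0 :=
    pow_ne_zero _ (norm_ne_zero_iff.mpr (sub_ne_zero_of_ne hAC))
  have hD1' : ‖B - A‖^2 ≠ 0 :=
    pow_ne_zero _ (norm_ne_zero_iff.mpr (sub_ne_zero_of_ne hBA))
  have hD1 : al + be - 2*k ≠ 0 := nAB ▸ hD1'
  have hD2 : al + ga - 2*k ≠ 0 := nAC ▸ hD2'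
  have ht' : t * (al + ga - 2*k) = ga - k := by
    rw [← nAC, ← hHC, htdef]; exact div_mul_cancel₀ _ hD2'
  have hs' : s * (al + be - 2*k) = be - k := by
    have h1 : ‖A - B‖^2 = al + be - 2*k := by rw [← nAB, norm_sub_rev]
    rw [← h1, ← hHB, hsdef]
    exact div_mul_cancel₀ _ (h1 ▸ hD1)
  -- squared length of A - M
  have hAMv : A - M = (1-t-s) • (A-H) + (s-1) • (B-H) + (t-1) • (C-H) := by
    rw [hM, hB'v, hC'v, hFb, hFc]; module
  have hAM : ‖A - M‖^2 = (1-t-s)^2*al + (s-1)^2*be + (t-1)^2*ga + 2*(1-t-s)*(s-1)*k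
      + 2*(1-t-s)*(t-1)*k + 2*(s-1)*(t-1)*k := by
    rw [hAMv, ← real_inner_self_eq_norm_sq, halc, hbec, hgac, hkc]
    simp only [PiLp.inner_apply, RCLike.inner_apply, conj_trivial, Fin.sum_univ_two,
      PiLp.sub_apply, PiLp.add_apply, PiLp.smul_apply, smul_eq_mul]
    linear_combination (2*(1-t-s)*(t-1)) * hk1c + (2*(s-1)*(t-1)) * hk2c
  -- main scalar identity
  have key := scalar_key al be ga k t s ht' hs' hgram
  have hcancel : ((al+be-2*k)^2*(al+ga-2*k)^2) ≠ 0 := by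
    exact mul_ne_zero (pow_ne_zero _ hD1) (pow_ne_zero _ hD2)
  have key2 : ‖A - M‖^2 * ((al+be-2*k)*(al+ga-2*k)) = al * (al-k)^2 := by
    rw [hAM]
    exact mul_right_cancel₀ hcancel (by linear_combination key)
  -- assemble
  have hcosval : Real.cos (∠ B A C) = ⟪B - A, C - A⟫ / (‖B - A‖ * ‖C - A‖) := by
    rw [show ∠ B A C = InnerProductGeometry.angle (B -ᵥ A) (C -ᵥ A) from rfl,
      InnerProductGeometry.cos_angle, vsub_eq_sub, vsub_eq_sub]
  have hcospos : 0 < Real.cos (∠ C A B) := by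
    apply Real.cos_pos_of_mem_Ioo
    constructor
    · have h0 := EuclideanGeometry.angle_nonneg C A B
      have := Real.pi_pos
      linarith
    · exact hA1
  have hipos : 0 < ⟪C - A, B - A⟫ := by
    rw [show ∠ C A B = InnerProductGeometry.angle (C -ᵥ A) (B -ᵥ A) from rfl,
      InnerProductGeometry.cos_angle, vsub_eq_sub, vsub_eq_sub] at hcospos
    have hdenp : 0 < ‖C - A‖ * ‖B - A‖ := by
      apply mul_pos <;> rw [norm_pos_iff] <;> [exact sub_ne_zero_of_ne hCA;
        exact sub_ne_zero_of_ne hBA]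
    by_contra hle
    push_neg at hle
    have : ⟪C - A, B - A⟫ / (‖C - A‖ * ‖B - A‖) ≤ 0 := div_nonpos_of_nonpos_of_nonneg hle hdenp.le
    linarith
  have hinn : 0 ≤ ⟪B - A, C - A⟫ := by rw [real_inner_comm]; exact hipos.le
  have hnb : 0 < ‖B - A‖ := norm_pos_iff.mpr (sub_ne_zero_of_ne hBA)
  have hnc : 0 < ‖C - A‖ := norm_pos_iff.mpr (sub_ne_zero_of_ne hCA)
  have hRnn : 0 ≤ ‖A - H‖ * ⟪B - A, C - A⟫ / (‖B - A‖ * ‖C - A‖) :=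
    div_nonneg (mul_nonneg (norm_nonneg _) hinn) (mul_nonneg hnb.le hnc.le)
  have hsq : ‖A - M‖^2 = (‖A - H‖ * ⟪B - A, C - A⟫ / (‖B - A‖ * ‖C - A‖))^2 := by
    rw [div_pow, mul_pow, mul_pow, eq_div_iff (by positivity)]
    have hCA2 : ‖C - A‖^2 = al + ga - 2*k := by rw [norm_sub_rev, nAC]
    have hAH2 : ‖A - H‖^2 = al := (real_inner_self_eq_norm_sq (A - H)).symm ▸ rfl
    rw [nAB, hCA2, nBAC, show ‖A - H‖^2 = al from by
      rw [← real_inner_self_eq_norm_sq, hal]]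
    linear_combination key2
  have hfin : ‖A - M‖ = ‖A - H‖ * ⟪B - A, C - A⟫ / (‖B - A‖ * ‖C - A‖) := by
    calc ‖A - M‖ = Real.sqrt (‖A - M‖^2) := (Real.sqrt_sq (norm_nonneg _)).symm
    _ = Real.sqrt ((‖A - H‖ * ⟪B - A, C - A⟫ / (‖B - A‖ * ‖C - A‖))^2) := by rw [hsq]
    _ = _ := Real.sqrt_sq hRnn
  rw [hdAX, hcosval, dist_eq_norm, hfin]
  ring
end

section
/- Let ABC be an acute triangle with orthocenter H, let A', B', C' be the reflections of H over BC, CA, AB respectively, and let X, Y, Z be the reflections of A, B, C over the lines B'C', C'A', A'B' respectively. Then the line XH is perpendicular to the line YZ. -/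
open EuclideanGeometry Real RealInnerProductSpace

noncomputable def cpt (p : EuclideanSpace ℝ (Fin 2)) : ℂ := (p 0 : ℂ) + (p 1 : ℂ) * Complex.I

lemma refl_vec {V : Type*} [NormedAddCommGroup V] [InnerProductSpace ℝ V]
    [FiniteDimensional ℝ V] (P Q M : V) (h : P ≠ Q) :
    EuclideanGeometry.reflection (affineSpan ℝ {P, Q}) M
      = (2 * (⟪M - P, Q - P⟫ / ⟪Q - P, Q - P⟫)) • (Q - P) + (P + (P - M)) := by
  have hn : ⟪Q - P, Q - P⟫ ≠ (0:ℝ) := by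
    simpa [sub_eq_zero] using fun hq : Q - P = 0 => h (by
      have := sub_eq_zero.mp hq; exact this.symm)
  set t : ℝ := ⟪M - P, Q - P⟫ / ⟪Q - P, Q - P⟫ with ht
  have hproj : (EuclideanGeometry.orthogonalProjection (affineSpan ℝ {P, Q}) M : V)
      = t • (Q - P) + P := by
    have hmem : t • (Q - P) + P ∈ affineSpan ℝ {P, Q} := by
      have := AffineMap.lineMap_mem_affineSpan_pair (k := ℝ) t P Q
      simpa [AffineMap.lineMap_apply, vsub_eq_sub, vadd_eq_add] using this
    have horth : t • (Q - P) + P ∈ AffineSubspace.mk' M (affineSpan ℝ {P, Q}).directionᗮ := by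
      rw [AffineSubspace.mem_mk']
      rw [direction_affineSpan, vectorSpan_pair_rev]
      rw [Submodule.mem_orthogonal_singleton_iff_inner_right]
      have : (t • (Q - P) + P) -ᵥ M = t • (Q - P) - (M - P) := by
        simp [vsub_eq_sub]; abel
      rw [this, inner_sub_right, real_inner_smul_right]
      rw [ht]; field_simp [real_inner_comm]
      simp only [vsub_eq_sub, real_inner_comm (M - P) (Q - P)]; ring
    have := EuclideanGeometry.inter_eq_singleton_orthogonalProjection (s := affineSpan ℝ {P, Q}) M
    have hin : (t • (Q - P) + P) ∈ (↑(affineSpan ℝ {P, Q}) : Set V) ∩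
        ↑(AffineSubspace.mk' M (affineSpan ℝ {P, Q}).directionᗮ) := ⟨hmem, horth⟩
    rw [this] at hin
    exact (Set.mem_singleton_iff.mp hin).symm
  rw [EuclideanGeometry.reflection_apply', hproj]
  simp [vsub_eq_sub, vadd_eq_add, two_mul]
  module

lemma refl_cc (P Q M R : EuclideanSpace ℝ (Fin 2)) (h : P ≠ Q)
    (hR : R = EuclideanGeometry.reflection (affineSpan ℝ {P, Q}) M) :
    (starRingEnd ℂ) (cpt Q - cpt P) * (cpt R - cpt P)
      = (starRingEnd ℂ) (cpt M - cpt P) * (cpt Q - cpt P) := by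
  have hn : ⟪Q - P, Q - P⟫ ≠ (0:ℝ) := by
    intro h0
    exact h (sub_eq_zero.mp (inner_self_eq_zero.mp h0)).symm
  have hco : ((Q 0 - P 0)^2 + (Q 1 - P 1)^2 : ℝ) ≠ 0 := by
    have : ⟪Q - P, Q - P⟫ = (Q 0 - P 0)^2 + (Q 1 - P 1)^2 := by
      simp only [PiLp.inner_apply, RCLike.inner_apply, conj_trivial, Fin.sum_univ_two, PiLp.sub_apply]
      ring
    rwa [this] at hn
  have hrv := refl_vec P Q M h
  rw [hrv] at hR
  have h0 : R 0 = (2 * (⟪M - P, Q - P⟫ / ⟪Q - P, Q - P⟫)) * (Q 0 - P 0) + (P 0 + (P 0 - M 0)) := by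
    rw [hR]; simp
  have h1 : R 1 = (2 * (⟪M - P, Q - P⟫ / ⟪Q - P, Q - P⟫)) * (Q 1 - P 1) + (P 1 + (P 1 - M 1)) := by
    rw [hR]; simp
  have hi : ⟪M - P, Q - P⟫ = (M 0 - P 0) * (Q 0 - P 0) + (M 1 - P 1) * (Q 1 - P 1) := by
    simp [PiLp.inner_apply, RCLike.inner_apply, Fin.sum_univ_two]; ring
  have hi2 : ⟪Q - P, Q - P⟫ = (Q 0 - P 0)^2 + (Q 1 - P 1)^2 := by
    simp only [PiLp.inner_apply, RCLike.inner_apply, conj_trivial, Fin.sum_univ_two, PiLp.sub_apply]; ring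
  rw [hi, hi2] at h0 h1
  rw [Complex.ext_iff]
  simp only [cpt, Complex.mul_re, Complex.mul_im, Complex.sub_re, Complex.sub_im,
    Complex.add_re, Complex.add_im, Complex.ofReal_re, Complex.ofReal_im,
    Complex.mul_I_re, Complex.mul_I_im, Complex.conj_re, Complex.conj_im, Complex.I_re, Complex.I_im]
  rw [h0, h1]
  constructor <;> (field_simp; ring)

lemma cpt_inj {p q : EuclideanSpace ℝ (Fin 2)} (h : cpt p = cpt q) : p = q := by
  rw [Complex.ext_iff] at h
  simp [cpt] at h
  ext i
  fin_cases i <;> tauto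

lemma cpt_sub (p q : EuclideanSpace ℝ (Fin 2)) : cpt (p - q) = cpt p - cpt q := by
  simp [cpt, Complex.ext_iff]

lemma inner2 (u v : EuclideanSpace ℝ (Fin 2)) : ⟪u, v⟫ = u 0 * v 0 + u 1 * v 1 := by
  simp [PiLp.inner_apply, RCLike.inner_apply, Fin.sum_univ_two]; ring

lemma inner_c (u v : EuclideanSpace ℝ (Fin 2)) :
    ((⟪u, v⟫ : ℝ) : ℂ) * 2 = cpt u * (starRingEnd ℂ) (cpt v) + (starRingEnd ℂ) (cpt u) * cpt v := by
  rw [inner2]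
  simp [cpt, Complex.ext_iff]
  ring_nf
  constructor <;> trivial

lemma inner_pos_of_angle_lt {p q r : EuclideanSpace ℝ (Fin 2)} (h : ∠ p q r < π / 2) :
    0 < ⟪p - q, r - q⟫ := by
  have hx : p - q ≠ 0 := by
    intro h0
    rw [EuclideanGeometry.angle, show p -ᵥ q = p - q from rfl, h0,
      InnerProductGeometry.angle_zero_left] at h
    exact lt_irrefl _ h
  have hy : r - q ≠ 0 := by
    intro h0
    rw [EuclideanGeometry.angle, show r -ᵥ q = r - q from rfl, h0,
      InnerProductGeometry.angle_zero_right] at h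
    exact lt_irrefl _ h
  have hcos : 0 < Real.cos (InnerProductGeometry.angle (p - q) (r - q)) := by
    apply Real.cos_pos_of_mem_Ioo
    constructor
    · have := InnerProductGeometry.angle_nonneg (p - q) (r - q)
      have : (0:ℝ) < π / 2 := by positivity
      linarith [InnerProductGeometry.angle_nonneg (p - q) (r - q)]
    · exact h
  have hc := InnerProductGeometry.cos_angle (p - q) (r - q)
  have hnx : 0 < ‖p - q‖ := norm_pos_iff.mpr hx
  have hny : 0 < ‖r - q‖ := norm_pos_iff.mpr hy
  have : ⟪p - q, r - q⟫ = Real.cos (InnerProductGeometry.angle (p - q) (r - q)) * (‖p - q‖ * ‖r - q‖) := by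
    rw [hc]; field_simp
  rw [this]
  positivity


set_option maxHeartbeats 1000000 in
theorem stmt6
    (A B C H A' B' C' X Y Z : EuclideanSpace ℝ (Fin 2))

    (hacute : ∠ C A B < π / 2 ∧ ∠ A B C < π / 2 ∧ ∠ B C A < π / 2)
    (hH₁ : ⟪A - H, B - C⟫ = (0:ℝ)) (hH₂ : ⟪B - H, C - A⟫ = (0:ℝ))
    (hH₃ : ⟪C - H, A - B⟫ = (0:ℝ))
    (hA' : A' = EuclideanGeometry.reflection (affineSpan ℝ {B, C}) H)
    (hB' : B' = EuclideanGeometry.reflection (affineSpan ℝ {C, A}) H)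
    (hC' : C' = EuclideanGeometry.reflection (affineSpan ℝ {A, B}) H)
    (hX : X = EuclideanGeometry.reflection (affineSpan ℝ {B', C'}) A)
    (hY : Y = EuclideanGeometry.reflection (affineSpan ℝ {C', A'}) B)
    (hZ : Z = EuclideanGeometry.reflection (affineSpan ℝ {A', B'}) C) :
    ⟪H - X, Z - Y⟫ = (0:ℝ) := by
  have hpA : 0 < ⟪C - A, B - A⟫ := inner_pos_of_angle_lt hacute.1
  have hpB : 0 < ⟪A - B, C - B⟫ := inner_pos_of_angle_lt hacute.2.1
  have hpC : 0 < ⟪B - C, A - C⟫ := inner_pos_of_angle_lt hacute.2.2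
  have hAB : A ≠ B := by intro hEq; rw [hEq] at hpA; simp [inner2] at hpA
  have hAC : A ≠ C := by intro hEq; rw [hEq] at hpA; simp [inner2] at hpA
  have hBC : B ≠ C := by intro hEq; rw [hEq] at hpB; simp [inner2] at hpB
  have g1 : (A 0 - H 0) * (B 0 - C 0) + (A 1 - H 1) * (B 1 - C 1) = 0 := by
    rw [inner2] at hH₁; simpa using hH₁
  have g2 : (B 0 - H 0) * (C 0 - A 0) + (B 1 - H 1) * (C 1 - A 1) = 0 := by
    rw [inner2] at hH₂; simpa using hH₂
  have pa : 0 < (C 0 - A 0) * (B 0 - A 0) + (C 1 - A 1) * (B 1 - A 1) := by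
    rw [inner2] at hpA; simpa using hpA
  have pb : 0 < (A 0 - B 0) * (C 0 - B 0) + (A 1 - B 1) * (C 1 - B 1) := by
    rw [inner2] at hpB; simpa using hpB
  have pc : 0 < (B 0 - C 0) * (A 0 - C 0) + (B 1 - C 1) * (A 1 - C 1) := by
    rw [inner2] at hpC; simpa using hpC
  set d : ℝ := (B 0 - A 0) * (C 1 - A 1) - (B 1 - A 1) * (C 0 - A 0) with hd_def
  have hd : d ≠ 0 := by
    intro h0
    have key : ((A 0 - B 0) * (C 0 - B 0) + (A 1 - B 1) * (C 1 - B 1)) *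
        ((B 0 - C 0) * (A 0 - C 0) + (B 1 - C 1) * (A 1 - C 1))
        = d^2 - ((C 0 - A 0) * (B 0 - A 0) + (C 1 - A 1) * (B 1 - A 1)) *
          ((B 0 - C 0)^2 + (B 1 - C 1)^2) := by rw [hd_def]; ring
    rw [h0] at key
    have h2 := mul_pos pb pc
    have h3 : 0 ≤ ((C 0 - A 0) * (B 0 - A 0) + (C 1 - A 1) * (B 1 - A 1)) *
        ((B 0 - C 0)^2 + (B 1 - C 1)^2) := by positivity
    nlinarith [key, h2, h3]
  set o0 : ℝ := ((B 0^2 + B 1^2 - A 0^2 - A 1^2) * (C 1 - A 1)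
      - (C 0^2 + C 1^2 - A 0^2 - A 1^2) * (B 1 - A 1)) / (2*d) with ho0
  set o1 : ℝ := ((B 0 - A 0) * (C 0^2 + C 1^2 - A 0^2 - A 1^2)
      - (C 0 - A 0) * (B 0^2 + B 1^2 - A 0^2 - A 1^2)) / (2*d) with ho1
  have hoA : (B 0 - o0)^2 + (B 1 - o1)^2 = (A 0 - o0)^2 + (A 1 - o1)^2 := by
    rw [ho0, ho1]; field_simp; rw [hd_def]; ring
  have hoC : (C 0 - o0)^2 + (C 1 - o1)^2 = (A 0 - o0)^2 + (A 1 - o1)^2 := by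
    rw [ho0, ho1]; field_simp; rw [hd_def]; ring
  have t1 : (A 0 - (A 0 + B 0 + C 0 - 2*o0)) * (B 0 - C 0)
      + (A 1 - (A 1 + B 1 + C 1 - 2*o1)) * (B 1 - C 1) = 0 := by
    rw [ho0, ho1]; field_simp; rw [hd_def]; ring
  have t2 : (B 0 - (A 0 + B 0 + C 0 - 2*o0)) * (C 0 - A 0)
      + (B 1 - (A 1 + B 1 + C 1 - 2*o1)) * (C 1 - A 1) = 0 := by
    rw [ho0, ho1]; field_simp; rw [hd_def]; ring
  have u1 : ((A 0 + B 0 + C 0 - 2*o0) - H 0) * (B 0 - C 0)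
      + ((A 1 + B 1 + C 1 - 2*o1) - H 1) * (B 1 - C 1) = 0 := by linear_combination g1 - t1
  have u2 : ((A 0 + B 0 + C 0 - 2*o0) - H 0) * (C 0 - A 0)
      + ((A 1 + B 1 + C 1 - 2*o1) - H 1) * (C 1 - A 1) = 0 := by linear_combination g2 - t2
  have hH0 : H 0 = A 0 + B 0 + C 0 - 2*o0 := by
    have hm : ((A 0 + B 0 + C 0 - 2*o0) - H 0) * d = 0 := by
      rw [hd_def]; linear_combination (C 1 - A 1) * u1 - (B 1 - C 1) * u2
    have := (mul_eq_zero.mp hm).resolve_right hd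
    linarith
  have hH1 : H 1 = A 1 + B 1 + C 1 - 2*o1 := by
    have hm : ((A 1 + B 1 + C 1 - 2*o1) - H 1) * d = 0 := by
      rw [hd_def]; linear_combination (B 0 - C 0) * u2 - (C 0 - A 0) * u1
    have := (mul_eq_zero.mp hm).resolve_right hd
    linarith
  -- complex setup
  obtain ⟨o, ho⟩ : ∃ x : ℂ, x = (o0 : ℂ) + (o1 : ℂ) * Complex.I := ⟨_, rfl⟩
  have hF1 : cpt H = cpt A + cpt B + cpt C - 2*o := by
    rw [Complex.ext_iff]
    simp [cpt, ho]
    constructor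
    · linarith [hH0]
    · linarith [hH1]
  obtain ⟨α, hαd⟩ : ∃ x : ℂ, x = cpt A - o := ⟨_, rfl⟩
  obtain ⟨β, hβd⟩ : ∃ x : ℂ, x = cpt B - o := ⟨_, rfl⟩
  obtain ⟨γ, hγd⟩ : ∃ x : ℂ, x = cpt C - o := ⟨_, rfl⟩
  obtain ⟨α', hα'd⟩ : ∃ x : ℂ, x = cpt A' - o := ⟨_, rfl⟩
  obtain ⟨β', hβ'd⟩ : ∃ x : ℂ, x = cpt B' - o := ⟨_, rfl⟩
  obtain ⟨γ', hγ'd⟩ : ∃ x : ℂ, x = cpt C' - o := ⟨_, rfl⟩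
  obtain ⟨ξ, hξd⟩ : ∃ x : ℂ, x = cpt X - o := ⟨_, rfl⟩
  obtain ⟨η, hηd⟩ : ∃ x : ℂ, x = cpt Y - o := ⟨_, rfl⟩
  obtain ⟨ζ, hζd⟩ : ∃ x : ℂ, x = cpt Z - o := ⟨_, rfl⟩
  have hq1 : β * (starRingEnd ℂ) β = α * (starRingEnd ℂ) α := by
    rw [hαd, hβd, Complex.mul_conj, Complex.mul_conj]
    norm_cast
    simp [Complex.normSq_apply, cpt, ho]
    linear_combination hoA
  have hq2 : γ * (starRingEnd ℂ) γ = α * (starRingEnd ℂ) α := by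
    rw [hαd, hγd, Complex.mul_conj, Complex.mul_conj]
    norm_cast
    simp [Complex.normSq_apply, cpt, ho]
    linear_combination hoC
  have hzab : cpt A ≠ cpt B := fun h => hAB (cpt_inj h)
  have hzac : cpt A ≠ cpt C := fun h => hAC (cpt_inj h)
  have hzbc : cpt B ≠ cpt C := fun h => hBC (cpt_inj h)
  have hsab : α - β ≠ 0 := by
    rw [hαd, hβd]
    intro h0
    exact hzab (by linear_combination h0)
  have hsac : α - γ ≠ 0 := by
    rw [hαd, hγd]
    intro h0
    exact hzac (by linear_combination h0)
  have hsbc : β - γ ≠ 0 := by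
    rw [hβd, hγd]
    intro h0
    exact hzbc (by linear_combination h0)
  have hal : α ≠ 0 := by
    intro h0
    rw [h0] at hq1
    simp only [map_zero, mul_zero, zero_mul] at hq1
    rcases mul_eq_zero.mp hq1 with h|h
    · rw [← h0] at h; exact hsab (by rw [h, h0, sub_zero])
    · rw [starRingEnd_apply, star_eq_zero] at h
      rw [← h0] at h; exact hsab (by rw [h, h0, sub_zero])
  have hbe : β ≠ 0 := by
    intro h0
    rw [h0, zero_mul] at hq1
    rcases mul_eq_zero.mp hq1.symm with h|h
    · exact hal h
    · rw [starRingEnd_apply, star_eq_zero] at h; exact hal h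
  have hga : γ ≠ 0 := by
    intro h0
    rw [h0, zero_mul] at hq2
    rcases mul_eq_zero.mp hq2.symm with h|h
    · exact hal h
    · rw [starRingEnd_apply, star_eq_zero] at h; exact hal h
  have hcal : (starRingEnd ℂ) α ≠ 0 := by
    intro h0; rw [starRingEnd_apply, star_eq_zero] at h0; exact hal h0
  have hcbe : (starRingEnd ℂ) β ≠ 0 := by
    intro h0; rw [starRingEnd_apply, star_eq_zero] at h0; exact hbe h0
  have hcga : (starRingEnd ℂ) γ ≠ 0 := by
    intro h0; rw [starRingEnd_apply, star_eq_zero] at h0; exact hga h0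
  -- acute: sums nonzero
  have hbega : β + γ ≠ 0 := by
    intro hs
    have hsc : (starRingEnd ℂ) β + (starRingEnd ℂ) γ = 0 := by
      have := congrArg (starRingEnd ℂ) hs
      simpa only [map_add, map_zero] using this
    have hic := inner_c (C - A) (B - A)
    rw [cpt_sub, cpt_sub] at hic
    have r1 : cpt C - cpt A = γ - α := by rw [hγd, hαd]; ring
    have r2 : cpt B - cpt A = β - α := by rw [hβd, hαd]; ring
    rw [r1, r2] at hic; simp only [map_sub] at hic
    have hz : ((⟪C - A, B - A⟫ : ℝ) : ℂ) * 2 = 0 := by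
      rw [hic]; linear_combination ((-1:ℂ)*((starRingEnd ℂ) α) + ((starRingEnd ℂ) γ)) * hs + ((-1:ℂ)*α + γ) * hsc + ((-2:ℂ)) * hq2
    norm_cast at hz
    linarith
  have hgaal : γ + α ≠ 0 := by
    intro hs
    have hsc : (starRingEnd ℂ) γ + (starRingEnd ℂ) α = 0 := by
      have := congrArg (starRingEnd ℂ) hs
      simpa only [map_add, map_zero] using this
    have hic := inner_c (A - B) (C - B)
    rw [cpt_sub, cpt_sub] at hic
    have r1 : cpt A - cpt B = α - β := by rw [hαd, hβd]; ring
    have r2 : cpt C - cpt B = γ - β := by rw [hγd, hβd]; ring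
    rw [r1, r2] at hic; simp only [map_sub] at hic
    have hz : ((⟪A - B, C - B⟫ : ℝ) : ℂ) * 2 = 0 := by
      rw [hic]; linear_combination (((starRingEnd ℂ) α) + (-1:ℂ)*((starRingEnd ℂ) β)) * hs + (α + (-1:ℂ)*β) * hsc + ((2:ℂ)) * hq1
    norm_cast at hz
    linarith
  have halbe : α + β ≠ 0 := by
    intro hs
    have hsc : (starRingEnd ℂ) α + (starRingEnd ℂ) β = 0 := by
      have := congrArg (starRingEnd ℂ) hs
      simpa only [map_add, map_zero] using this
    have hic := inner_c (B - C) (A - C)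
    rw [cpt_sub, cpt_sub] at hic
    have r1 : cpt B - cpt C = β - γ := by rw [hβd, hγd]; ring
    have r2 : cpt A - cpt C = α - γ := by rw [hαd, hγd]; ring
    rw [r1, r2] at hic; simp only [map_sub] at hic
    have hz : ((⟪B - C, A - C⟫ : ℝ) : ℂ) * 2 = 0 := by
      rw [hic]; linear_combination (((starRingEnd ℂ) β) + (-1:ℂ)*((starRingEnd ℂ) γ)) * hs + (β + (-1:ℂ)*γ) * hsc + ((-2:ℂ)) * hq1 + ((2:ℂ)) * hq2
    norm_cast at hz
    linarith
  -- reflection equations for A', B', C'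
  have hrA' : ((starRingEnd ℂ) γ - (starRingEnd ℂ) β) * (α' - β)
      = ((starRingEnd ℂ) α + (starRingEnd ℂ) γ) * (γ - β) := by
    have h := refl_cc B C H A' hBC hA'
    have r1 : cpt C - cpt B = γ - β := by rw [hγd, hβd]; ring
    have r2 : cpt A' - cpt B = α' - β := by rw [hα'd, hβd]; ring
    have r3 : cpt H - cpt B = α + γ := by rw [hF1, hαd, hγd]; ring
    rw [r1, r2, r3] at h; simp only [map_sub, map_add] at h
    exact h
  have hrB' : ((starRingEnd ℂ) α - (starRingEnd ℂ) γ) * (β' - γ)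
      = ((starRingEnd ℂ) β + (starRingEnd ℂ) α) * (α - γ) := by
    have h := refl_cc C A H B' (Ne.symm hAC) hB'
    have r1 : cpt A - cpt C = α - γ := by rw [hαd, hγd]; ring
    have r2 : cpt B' - cpt C = β' - γ := by rw [hβ'd, hγd]; ring
    have r3 : cpt H - cpt C = β + α := by rw [hF1, hβd, hαd]; ring
    rw [r1, r2, r3] at h; simp only [map_sub, map_add] at h
    exact h
  have hrC' : ((starRingEnd ℂ) β - (starRingEnd ℂ) α) * (γ' - α)
      = ((starRingEnd ℂ) γ + (starRingEnd ℂ) β) * (β - α) := by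
    have h := refl_cc A B H C' hAB hC'
    have r1 : cpt B - cpt A = β - α := by rw [hβd, hαd]; ring
    have r2 : cpt C' - cpt A = γ' - α := by rw [hγ'd, hαd]; ring
    have r3 : cpt H - cpt A = γ + β := by rw [hF1, hγd, hβd]; ring
    rw [r1, r2, r3] at h; simp only [map_sub, map_add] at h
    exact h
  have e1 : α * α' = -(β * γ) := by
    have hK : α * (starRingEnd ℂ) α * (β - γ) ≠ 0 :=
      mul_ne_zero (mul_ne_zero hal hcal) hsbc
    apply mul_left_cancel₀ hK
    linear_combination (α*β*γ) * hrA' + (α'*α*γ + (-1:ℂ)*α*β*γ) * hq1 + ((-1:ℂ)*α'*α*β + α*β*γ) * hq2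
  have e2 : β * β' = -(γ * α) := by
    have hK : β * (starRingEnd ℂ) β * (γ - α) ≠ 0 := by
      have hr : γ - α = -(α - γ) := by ring
      rw [hr]
      exact mul_ne_zero (mul_ne_zero hbe hcbe) (neg_ne_zero.mpr hsac)
    apply mul_left_cancel₀ hK
    linear_combination (α*β*γ) * hrB' + ((-1:ℂ)*β'*α*β + β'*β*γ) * hq1 + (β'*α*β + (-1:ℂ)*α*β*γ) * hq2
  have e3 : γ * γ' = -(α * β) := by
    have hK : γ * (starRingEnd ℂ) γ * (α - β) ≠ 0 :=
      mul_ne_zero (mul_ne_zero hga hcga) hsab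
    apply mul_left_cancel₀ hK
    linear_combination (α*β*γ) * hrC' + ((-1:ℂ)*γ'*α*γ + α*β*γ) * hq1 + (γ'*α*γ + (-1:ℂ)*γ'*β*γ) * hq2
  have e1c : (starRingEnd ℂ) α * (starRingEnd ℂ) α'
      = -((starRingEnd ℂ) β * (starRingEnd ℂ) γ) := by
    have := congrArg (starRingEnd ℂ) e1
    simpa only [map_mul, map_neg] using this
  have e2c : (starRingEnd ℂ) β * (starRingEnd ℂ) β'
      = -((starRingEnd ℂ) γ * (starRingEnd ℂ) α) := by
    have := congrArg (starRingEnd ℂ) e2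
    simpa only [map_mul, map_neg] using this
  have e3c : (starRingEnd ℂ) γ * (starRingEnd ℂ) γ'
      = -((starRingEnd ℂ) α * (starRingEnd ℂ) β) := by
    have := congrArg (starRingEnd ℂ) e3
    simpa only [map_mul, map_neg] using this
  -- primed points distinct
  have hdBC : β * γ * (γ' - β') = α * (γ - β) * (γ + β) := by
    linear_combination ((-1:ℂ)*γ) * e2 + (β) * e3
  have hdCA : γ * α * (α' - γ') = β * (α - γ) * (α + γ) := by
    linear_combination ((-1:ℂ)*α) * e3 + (γ) * e1
  have hdAB : α * β * (β' - α') = γ * (β - α) * (β + α) := by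
    linear_combination ((-1:ℂ)*β) * e1 + (α) * e2
  have hBC' : B' ≠ C' := by
    intro hEq
    have hz : γ' - β' = 0 := by
      rw [hγ'd, hβ'd, hEq]; ring
    rw [hz, mul_zero] at hdBC
    have h1 : α * (γ - β) * (γ + β) ≠ 0 := by
      have hr : γ - β = -(β - γ) := by ring
      have hr2 : γ + β = β + γ := by ring
      rw [hr, hr2]
      exact mul_ne_zero (mul_ne_zero hal (neg_ne_zero.mpr hsbc)) hbega
    exact h1 hdBC.symm
  have hCA' : C' ≠ A' := by
    intro hEq
    have hz : α' - γ' = 0 := by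
      rw [hγ'd, hα'd, hEq]; ring
    rw [hz, mul_zero] at hdCA
    have h1 : β * (α - γ) * (α + γ) ≠ 0 := by
      have hr2 : α + γ = γ + α := by ring
      rw [hr2]
      exact mul_ne_zero (mul_ne_zero hbe hsac) hgaal
    exact h1 hdCA.symm
  have hAB' : A' ≠ B' := by
    intro hEq
    have hz : β' - α' = 0 := by
      rw [hα'd, hβ'd, hEq]; ring
    rw [hz, mul_zero] at hdAB
    have h1 : γ * (β - α) * (β + α) ≠ 0 := by
      have hr : β - α = -(α - β) := by ring
      have hr2 : β + α = α + β := by ring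
      rw [hr, hr2]
      exact mul_ne_zero (mul_ne_zero hga (neg_ne_zero.mpr hsab)) halbe
    exact h1 hdAB.symm
  -- reflection equations for X, Y, Z
  have hrX' : ((starRingEnd ℂ) γ' - (starRingEnd ℂ) β') * (ξ - β')
      = ((starRingEnd ℂ) α - (starRingEnd ℂ) β') * (γ' - β') := by
    have h := refl_cc B' C' A X hBC' hX
    have r1 : cpt C' - cpt B' = γ' - β' := by rw [hγ'd, hβ'd]; ring
    have r2 : cpt X - cpt B' = ξ - β' := by rw [hξd, hβ'd]; ring
    have r3 : cpt A - cpt B' = α - β' := by rw [hαd, hβ'd]; ring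
    rw [r1, r2, r3] at h; simp only [map_sub] at h
    exact h
  have hrY' : ((starRingEnd ℂ) α' - (starRingEnd ℂ) γ') * (η - γ')
      = ((starRingEnd ℂ) β - (starRingEnd ℂ) γ') * (α' - γ') := by
    have h := refl_cc C' A' B Y hCA' hY
    have r1 : cpt A' - cpt C' = α' - γ' := by rw [hα'd, hγ'd]; ring
    have r2 : cpt Y - cpt C' = η - γ' := by rw [hηd, hγ'd]; ring
    have r3 : cpt B - cpt C' = β - γ' := by rw [hβd, hγ'd]; ring
    rw [r1, r2, r3] at h; simp only [map_sub] at h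
    exact h
  have hrZ' : ((starRingEnd ℂ) β' - (starRingEnd ℂ) α') * (ζ - α')
      = ((starRingEnd ℂ) γ - (starRingEnd ℂ) α') * (β' - α') := by
    have h := refl_cc A' B' C Z hAB' hZ
    have r1 : cpt B' - cpt A' = β' - α' := by rw [hβ'd, hα'd]; ring
    have r2 : cpt Z - cpt A' = ζ - α' := by rw [hζd, hα'd]; ring
    have r3 : cpt C - cpt A' = γ - α' := by rw [hγd, hα'd]; ring
    rw [r1, r2, r3] at h; simp only [map_sub] at h
    exact h
  have e4 : β * γ * ξ = -(α * (β^2 + γ^2 + β * γ)) := by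
    have hK : α^2 * ((starRingEnd ℂ) α)^3 * (β - γ) * (β + γ) ≠ 0 :=
      mul_ne_zero (mul_ne_zero (mul_ne_zero (pow_ne_zero 2 hal) (pow_ne_zero 3 hcal)) hsbc)
        hbega
    apply mul_left_cancel₀ hK
    linear_combination (β^3*((starRingEnd ℂ) β)*((starRingEnd ℂ) γ)*γ^3) * hrX' + (β^2*((starRingEnd ℂ) γ')*((starRingEnd ℂ) β)*((starRingEnd ℂ) γ)*γ^3 + (-1:ℂ)*β^2*((starRingEnd ℂ) α)*((starRingEnd ℂ) β)*((starRingEnd ℂ) γ)*γ^3) * e2 + ((-1:ℂ)*β^3*((starRingEnd ℂ) β')*((starRingEnd ℂ) β)*((starRingEnd ℂ) γ)*γ^2 + β^3*((starRingEnd ℂ) α)*((starRingEnd ℂ) β)*((starRingEnd ℂ) γ)*γ^2) * e3 + (ξ*β^3*((starRingEnd ℂ) γ)*γ^3 + α*β^4*((starRingEnd ℂ) γ)*γ^2) * e2c + ((-1:ℂ)*ξ*β^3*((starRingEnd ℂ) β)*γ^3 + (-1:ℂ)*α*β^2*((starRingEnd ℂ) β)*γ^4) * e3c + (ξ*α*β*((starRingEnd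 ℂ) α)^2*γ^3 + ξ*β^2*((starRingEnd ℂ) α)*((starRingEnd ℂ) β)*γ^3 + α*β*((starRingEnd ℂ) α)*((starRingEnd ℂ) β)*γ^4 + α*β*((starRingEnd ℂ) α)*((starRingEnd ℂ) γ)*γ^4 + (-1:ℂ)*α*β^3*((starRingEnd ℂ) α)*((starRingEnd ℂ) γ)*γ^2 + α^2*((starRingEnd ℂ) α)^2*γ^4) * hq1 + ((-1:ℂ)*ξ*α*β^3*((starRingEnd ℂ) α)^2*γ + (-1:ℂ)*ξ*β^3*((starRingEnd ℂ) α)*((starRingEnd ℂ) γ)*γ^2 + (-1:ℂ)*α*β^4*((starRingEnd ℂ) α)*((starRingEnd ℂ) γ)*γ + α^2*β*((starRingEnd ℂ) α)^2*γ^3 + (-1:ℂ)*α^2*β^3*((starRingEnd ℂ) α)^2*γ + (-1:ℂ)*α^2*β^4*((starRingEnd ℂ) α)^2) * hq2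
  have e5 : γ * α * η = -(β * (γ^2 + α^2 + γ * α)) := by
    have hK : α^2 * ((starRingEnd ℂ) α)^2 * (starRingEnd ℂ) β * (γ - α) * (γ + α) ≠ 0 := by
      have hr : γ - α = -(α - γ) := by ring
      rw [hr]
      exact mul_ne_zero (mul_ne_zero (mul_ne_zero (mul_ne_zero (pow_ne_zero 2 hal)
        (pow_ne_zero 2 hcal)) hcbe) (neg_ne_zero.mpr hsac)) hgaal
    apply mul_left_cancel₀ hK
    linear_combination (α^3*((starRingEnd ℂ) α)*((starRingEnd ℂ) γ)*γ^3) * hrY' + (α^3*((starRingEnd ℂ) α')*((starRingEnd ℂ) α)*((starRingEnd ℂ) γ)*γ^2 + (-1:ℂ)*α^3*((starRingEnd ℂ) α)*((starRingEnd ℂ) β)*((starRingEnd ℂ) γ)*γ^2) * e3 + ((-1:ℂ)*α^2*((starRingEnd ℂ) γ')*((starRingEnd ℂ) α)*((starRingEnd ℂ) γ)*γ^3 + α^2*((starRingEnd ℂ) α)*((starRingEnd ℂ) β)*((starRingEnd ℂ) γ)*γ^3) * e1 + (η*α^3*((starRingEnd ℂ) α)*γ^3 + α^2*β*((starRingEnd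 ℂ) α)*γ^4) * e3c + ((-1:ℂ)*η*α^3*((starRingEnd ℂ) γ)*γ^3 + (-1:ℂ)*α^4*β*((starRingEnd ℂ) γ)*γ^2) * e1c + ((-1:ℂ)*α^2*((starRingEnd ℂ) α)*((starRingEnd ℂ) γ)*γ^4 + α^3*((starRingEnd ℂ) α)^2*γ^3 + α^4*((starRingEnd ℂ) α)*((starRingEnd ℂ) γ)*γ^2 + α^4*((starRingEnd ℂ) γ)^2*γ^2 + (-1:ℂ)*α^5*((starRingEnd ℂ) α)^2*γ + (-1:ℂ)*α^6*((starRingEnd ℂ) α)^2) * hq1 + (η*α^3*((starRingEnd ℂ) β)*((starRingEnd ℂ) γ)*γ^2 + η*α^4*((starRingEnd ℂ) α)*((starRingEnd ℂ) β)*γ + (-1:ℂ)*α^3*((starRingEnd ℂ) α)^2*γ^3 + α^5*((starRingEnd ℂ) α)*((starRingEnd ℂ) γ)*γ + α^5*((starRingEnd ℂ) α)^2*γ + α^6*((starRingEnd ℂ) α)^2) * hq2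
  have e6 : α * β * ζ = -(γ * (α^2 + β^2 + α * β)) := by
    have hK : β^2 * ((starRingEnd ℂ) β)^2 * (starRingEnd ℂ) γ * (α - β) * (α + β) ≠ 0 :=
      mul_ne_zero (mul_ne_zero (mul_ne_zero (mul_ne_zero (pow_ne_zero 2 hbe)
        (pow_ne_zero 2 hcbe)) hcga) hsab) halbe
    apply mul_left_cancel₀ hK
    linear_combination (α^3*β^3*((starRingEnd ℂ) α)*((starRingEnd ℂ) β)) * hrZ' + (α^2*β^3*((starRingEnd ℂ) β')*((starRingEnd ℂ) α)*((starRingEnd ℂ) β) + (-1:ℂ)*α^2*β^3*((starRingEnd ℂ) α)*((starRingEnd ℂ) β)*((starRingEnd ℂ) γ)) * e1 + ((-1:ℂ)*α^3*β^2*((starRingEnd ℂ) α')*((starRingEnd ℂ) α)*((starRingEnd ℂ) β) + α^3*β^2*((starRingEnd ℂ) α)*((starRingEnd ℂ) β)*((starRingEnd ℂ) γ)) * e2 + (ζ*α^3*β^3*((starRingEnd ℂ) β) + α^4*β^2*((starRingEnd ℂ) β)*γ) * e1c + ((-1:ℂ)*ζ*α^3*β^3*((starRingEnd ℂ) α) +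 (-1:ℂ)*α^2*β^4*((starRingEnd ℂ) α)*γ) * e2c + ((-1:ℂ)*ζ*α*β^4*((starRingEnd ℂ) β)*((starRingEnd ℂ) γ) + (-1:ℂ)*ζ*α^2*β^3*((starRingEnd ℂ) α)*((starRingEnd ℂ) γ) + (-1:ℂ)*α*β^4*((starRingEnd ℂ) α)*((starRingEnd ℂ) γ)*γ + (-1:ℂ)*α*β^4*((starRingEnd ℂ) β)*((starRingEnd ℂ) γ)*γ + α^3*β^2*((starRingEnd ℂ) β)*((starRingEnd ℂ) γ)*γ + (-1:ℂ)*β^5*((starRingEnd ℂ) β)*((starRingEnd ℂ) γ)*γ) * hq1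
  have e4c : (starRingEnd ℂ) β * (starRingEnd ℂ) γ * (starRingEnd ℂ) ξ
      = -((starRingEnd ℂ) α * (((starRingEnd ℂ) β)^2 + ((starRingEnd ℂ) γ)^2
        + (starRingEnd ℂ) β * (starRingEnd ℂ) γ)) := by
    have := congrArg (starRingEnd ℂ) e4
    simpa only [map_mul, map_neg, map_add, map_pow] using this
  have e5c : (starRingEnd ℂ) γ * (starRingEnd ℂ) α * (starRingEnd ℂ) η
      = -((starRingEnd ℂ) β * (((starRingEnd ℂ) γ)^2 + ((starRingEnd ℂ) α)^2
        + (starRingEnd ℂ) γ * (starRingEnd ℂ) α)) := by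
    have := congrArg (starRingEnd ℂ) e5
    simpa only [map_mul, map_neg, map_add, map_pow] using this
  have e6c : (starRingEnd ℂ) α * (starRingEnd ℂ) β * (starRingEnd ℂ) ζ
      = -((starRingEnd ℂ) γ * (((starRingEnd ℂ) α)^2 + ((starRingEnd ℂ) β)^2
        + (starRingEnd ℂ) α * (starRingEnd ℂ) β)) := by
    have := congrArg (starRingEnd ℂ) e6
    simpa only [map_mul, map_neg, map_add, map_pow] using this
  -- final computation
  have key : α * β * γ * (starRingEnd ℂ) α * (starRingEnd ℂ) β * (starRingEnd ℂ) γ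
      * (((α + β + γ) - ξ) * ((starRingEnd ℂ) ζ - (starRingEnd ℂ) η)
        + (((starRingEnd ℂ) α + (starRingEnd ℂ) β + (starRingEnd ℂ) γ) - (starRingEnd ℂ) ξ)
          * (ζ - η)) = 0 := by
    linear_combination (α*((starRingEnd ℂ) η)*((starRingEnd ℂ) α)*((starRingEnd ℂ) β)*((starRingEnd ℂ) γ) + (-1:ℂ)*α*((starRingEnd ℂ) ζ)*((starRingEnd ℂ) α)*((starRingEnd ℂ) β)*((starRingEnd ℂ) γ)) * e4 + (β*((starRingEnd ℂ) ξ)*((starRingEnd ℂ) α)*((starRingEnd ℂ) β)*((starRingEnd ℂ) γ) + (-1:ℂ)*β*((starRingEnd ℂ) α)*((starRingEnd ℂ) β)*((starRingEnd ℂ) γ)^2 + (-1:ℂ)*β*((starRingEnd ℂ) α)*((starRingEnd ℂ) β)^2*((starRingEnd ℂ) γ) + (-1:ℂ)*β*((starRingEnd ℂ) α)^2*((starRingEnd ℂ) β)*((starRingEnd ℂ) γ)) * e5 + ((-1:ℂ)*((starRingEnd ℂ) ξ)*((starRingEnd ℂ) α)*((starRingEnd ℂ) β)*((starRingEnd ℂ)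 γ)*γ + ((starRingEnd ℂ) α)*((starRingEnd ℂ) β)*((starRingEnd ℂ) γ)^2*γ + ((starRingEnd ℂ) α)*((starRingEnd ℂ) β)^2*((starRingEnd ℂ) γ)*γ + ((starRingEnd ℂ) α)^2*((starRingEnd ℂ) β)*((starRingEnd ℂ) γ)*γ) * e6 + (α*β*((starRingEnd ℂ) α)*γ^2 + (-1:ℂ)*α*β^2*((starRingEnd ℂ) α)*γ + (-1:ℂ)*α^2*β^2*((starRingEnd ℂ) α) + α^2*((starRingEnd ℂ) α)*γ^2) * e4c + ((-1:ℂ)*α*β*((starRingEnd ℂ) β)*γ^2 + (-1:ℂ)*α*β^2*((starRingEnd ℂ) β)*γ + (-2:ℂ)*α^2*β*((starRingEnd ℂ) β)*γ + (-1:ℂ)*α^2*β^2*((starRingEnd ℂ) β) + (-1:ℂ)*α^2*((starRingEnd ℂ) β)*γ^2) * e5c + (α*β*((starRingEnd ℂ) γ)*γ^2 + α*β^2*((starRingEnd ℂ) γ)*γ + (2:ℂ)*α^2*β*((starRingEnd ℂ) γ)*γ + α^2*β^2*((starRingEnd ℂ) γ) + α^2*((starRingEnd ℂ) γ)*γ^2)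 * e6c + ((2:ℂ)*α*β*((starRingEnd ℂ) α)*((starRingEnd ℂ) β)*((starRingEnd ℂ) γ)*γ + (2:ℂ)*α*β*((starRingEnd ℂ) α)^2*((starRingEnd ℂ) β)*γ + (2:ℂ)*α*β*((starRingEnd ℂ) α)^2*((starRingEnd ℂ) γ)*γ + (-2:ℂ)*α*((starRingEnd ℂ) α)*((starRingEnd ℂ) γ)^2*γ^2 + (-2:ℂ)*α*((starRingEnd ℂ) α)^2*((starRingEnd ℂ) γ)*γ^2 + (2:ℂ)*α^2*β*((starRingEnd ℂ) α)*((starRingEnd ℂ) β)*((starRingEnd ℂ) γ) + (2:ℂ)*α^2*β*((starRingEnd ℂ) α)^2*((starRingEnd ℂ) β) + (2:ℂ)*α^2*β*((starRingEnd ℂ) α)^2*((starRingEnd ℂ) γ) + (2:ℂ)*α^2*((starRingEnd ℂ) α)*((starRingEnd ℂ) β)*((starRingEnd ℂ) γ)*γ + (-2:ℂ)*α^2*((starRingEnd ℂ) α)*((starRingEnd ℂ) γ)^2*γ + (2:ℂ)*α^2*((starRingEnd ℂ) α)^2*((starRingEnd ℂ) β)*γ + (2:ℂ)*α^2*((starRingEnd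 ℂ) α)^2*((starRingEnd ℂ) γ)*γ + (2:ℂ)*α^2*((starRingEnd ℂ) α)^3*γ + (2:ℂ)*α^3*((starRingEnd ℂ) α)^2*((starRingEnd ℂ) γ) + (2:ℂ)*α^3*((starRingEnd ℂ) α)^3) * hq1 + ((-2:ℂ)*α*β*((starRingEnd ℂ) α)^2*((starRingEnd ℂ) γ)*γ + (-2:ℂ)*α^2*β*((starRingEnd ℂ) α)^2*((starRingEnd ℂ) γ) + (-2:ℂ)*α^2*((starRingEnd ℂ) α)*((starRingEnd ℂ) β)*((starRingEnd ℂ) γ)*γ + (-2:ℂ)*α^2*((starRingEnd ℂ) α)^2*((starRingEnd ℂ) β)*γ + (-4:ℂ)*α^2*((starRingEnd ℂ) α)^2*((starRingEnd ℂ) γ)*γ + (-2:ℂ)*α^2*((starRingEnd ℂ) α)^3*γ + (-2:ℂ)*α^3*((starRingEnd ℂ) α)^2*((starRingEnd ℂ) γ) + (-2:ℂ)*α^3*((starRingEnd ℂ) α)^3) * hq2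
  have hW : α * β * γ * (starRingEnd ℂ) α * (starRingEnd ℂ) β * (starRingEnd ℂ) γ ≠ 0 :=
    mul_ne_zero (mul_ne_zero (mul_ne_zero (mul_ne_zero (mul_ne_zero hal hbe) hga) hcal)
      hcbe) hcga
  have hG := (mul_eq_zero.mp key).resolve_left hW
  have hfin := inner_c (H - X) (Z - Y)
  rw [cpt_sub, cpt_sub] at hfin
  have r1 : cpt H - cpt X = (α + β + γ) - ξ := by rw [hF1, hαd, hβd, hγd, hξd]; ring
  have r2 : cpt Z - cpt Y = ζ - η := by rw [hζd, hηd]; ring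
  rw [r1, r2] at hfin; simp only [map_sub, map_add] at hfin
  have hz : ((⟪H - X, Z - Y⟫ : ℝ) : ℂ) * 2 = 0 := by
    rw [hfin]; linear_combination hG
  norm_cast at hz
  linarith
end

section
/- Let ABC be an acute triangle with orthocenter H, let A', B', C' be the reflections of H over BC, CA, AB respectively, and let X, Y, Z be the reflections of A, B, C over the lines B'C', C'A', A'B' respectively. Then H is the orthocenter of triangle XYZ. -/
open EuclideanGeometry Real RealInnerProductSpace

private lemma re_zero_of (w : ℂ) (h : w + (starRingEnd ℂ) w = 0) : w.re = 0 := by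
  have h2 := Complex.add_conj w
  rw [h] at h2
  have : (2 * w.re : ℝ) = 0 := by exact_mod_cast h2.symm
  linarith

private lemma refl_pair_char {E : Type*} [NormedAddCommGroup E] [InnerProductSpace ℝ E]
    [FiniteDimensional ℝ E] (b c p q : E)
    (h1 : ∃ t : ℝ, AffineMap.lineMap b c t = midpoint ℝ p q)
    (h2 : ⟪c - b, p - q⟫ = (0:ℝ)) :
    EuclideanGeometry.reflection (affineSpan ℝ {b, c}) p = q := by
  have hmem : midpoint ℝ p q ∈ affineSpan ℝ ({b, c} : Set E) := by
    obtain ⟨t, ht⟩ := h1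
    rw [← ht]
    exact AffineMap.lineMap_mem_affineSpan_pair t b c
  have hperp : midpoint ℝ p q -ᵥ p ∈ (affineSpan ℝ ({b, c} : Set E)).directionᗮ := by
    rw [direction_affineSpan, vectorSpan_pair]
    simp only [vsub_eq_sub]
    rw [Submodule.mem_orthogonal_singleton_iff_inner_right]
    have hmp : midpoint ℝ p q - p = (-(1/2) : ℝ) • (p - q) := by
      rw [midpoint_eq_smul_add]
      simp only [vsub_eq_sub, invOf_eq_inv]
      module
    rw [hmp, real_inner_smul_right]
    have : ⟪b - c, p - q⟫ = (0:ℝ) := by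
      have : b - c = -(c - b) := by abel
      rw [this, inner_neg_left, h2, neg_zero]
    rw [this, mul_zero]
  have hproj : (EuclideanGeometry.orthogonalProjection (affineSpan ℝ ({b, c} : Set E))
      (midpoint ℝ p q) : E) = midpoint ℝ p q :=
    EuclideanGeometry.orthogonalProjection_eq_self_iff.2 hmem
  have hkey : (EuclideanGeometry.orthogonalProjection (affineSpan ℝ ({b, c} : Set E)) p : E)
      = midpoint ℝ p q := by
    have hsing := EuclideanGeometry.inter_eq_singleton_orthogonalProjection
      (s := affineSpan ℝ ({b, c} : Set E)) p
    have : midpoint ℝ p q ∈ (affineSpan ℝ ({b, c} : Set E) : Set E) ∩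
        AffineSubspace.mk' p (affineSpan ℝ ({b, c} : Set E)).directionᗮ :=
      ⟨hmem, AffineSubspace.mem_mk'.2 hperp⟩
    rw [hsing] at this
    exact this.symm
  rw [EuclideanGeometry.reflection_apply', hkey]
  simp only [vsub_eq_sub, vadd_eq_add, midpoint_eq_smul_add, invOf_eq_inv]
  module

private lemma refl_map {E F : Type*} [NormedAddCommGroup E] [InnerProductSpace ℝ E]
    [FiniteDimensional ℝ E] [NormedAddCommGroup F] [InnerProductSpace ℝ F]
    [FiniteDimensional ℝ F] (f : E ≃ₗᵢ[ℝ] F) (b c p : E) :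
    EuclideanGeometry.reflection (affineSpan ℝ {f b, f c}) (f p)
      = f (EuclideanGeometry.reflection (affineSpan ℝ {b, c}) p) := by
  have hm : (EuclideanGeometry.orthogonalProjection (affineSpan ℝ ({b, c} : Set E)) p : E)
      ∈ affineSpan ℝ ({b, c} : Set E) := EuclideanGeometry.orthogonalProjection_mem p
  set m : E := (EuclideanGeometry.orthogonalProjection (affineSpan ℝ ({b, c} : Set E)) p : E)
    with hmdef
  have hq : EuclideanGeometry.reflection (affineSpan ℝ ({b, c} : Set E)) p = (m - p) + m := by
    rw [EuclideanGeometry.reflection_apply']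
    simp only [vsub_eq_sub, vadd_eq_add, ← hmdef]
  rw [hq]
  apply refl_pair_char
  · obtain ⟨t, ht⟩ : ∃ t : ℝ, t • (c -ᵥ b) = m -ᵥ b := by
      rw [← vadd_left_mem_affineSpan_pair]
      simpa using hm
    simp only [vsub_eq_sub] at ht
    refine ⟨t, ?_⟩
    have h1 : AffineMap.lineMap (f b) (f c) t = f (t • (c - b) + b) := by
      rw [AffineMap.lineMap_apply]
      simp only [vsub_eq_sub, vadd_eq_add, map_add, map_smul, map_sub]
    have h2 : midpoint ℝ (f p) (f ((m - p) + m)) = f (midpoint ℝ p ((m - p) + m)) := by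
      simp only [midpoint_eq_smul_add, invOf_eq_inv, map_add, map_smul]
    rw [h1, h2]
    congr 1
    rw [ht, midpoint_eq_smul_add, invOf_eq_inv]
    module
  · rw [← map_sub, ← map_sub, f.inner_map_map]
    have h3 : p - ((m - p) + m) = (2:ℝ) • (p - m) := by module
    rw [h3, real_inner_smul_right]
    have hperp := EuclideanGeometry.vsub_orthogonalProjection_mem_direction_orthogonal
      (s := affineSpan ℝ ({b, c} : Set E)) p
    have hd : c - b ∈ (affineSpan ℝ ({b, c} : Set E)).direction := by
      rw [direction_affineSpan, vectorSpan_pair]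
      exact Submodule.mem_span_singleton.2 ⟨-1, by simp only [vsub_eq_sub]; module⟩
    have h0 : ⟪c - b, p - m⟫ = (0:ℝ) := by
      simpa [vsub_eq_sub, ← hmdef] using (Submodule.mem_orthogonal _ _).1 hperp (c - b) hd
    rw [h0, mul_zero]

private lemma chord_reflection (o β γ pp : ℂ) (r : ℝ) (hr : r ≠ 0)
    (hb : β * (starRingEnd ℂ) β = (r:ℂ)^2) (hc : γ * (starRingEnd ℂ) γ = (r:ℂ)^2)
    (hbc : β ≠ γ) :
    EuclideanGeometry.reflection (affineSpan ℝ {o + β, o + γ}) (o + pp)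
      = o + β + γ - β * γ * (starRingEnd ℂ) pp / (r:ℂ)^2 := by
  have hr' : (r:ℂ) ≠ 0 := Complex.ofReal_ne_zero.2 hr
  have hr2 : (r:ℂ)^2 ≠ 0 := pow_ne_zero 2 hr'
  have hβ0 : β ≠ 0 := by rintro rfl; simp at hb; exact hr2 hb.symm
  have hγ0 : γ ≠ 0 := by rintro rfl; simp at hc; exact hr2 hc.symm
  have hcb : (starRingEnd ℂ) β = (r:ℂ)^2 / β := by
    rw [eq_div_iff hβ0]; linear_combination hb
  have hcg : (starRingEnd ℂ) γ = (r:ℂ)^2 / γ := by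
    rw [eq_div_iff hγ0]; linear_combination hc
  have hgb : γ - β ≠ 0 := sub_ne_zero.2 (Ne.symm hbc)
  set τ : ℂ := (pp + γ - β - β * γ * (starRingEnd ℂ) pp / (r:ℂ)^2) / (2 * (γ - β)) with hτdef
  have hD : (2:ℂ) * (γ - β) ≠ 0 := mul_ne_zero two_ne_zero hgb
  have hDc : (starRingEnd ℂ) (2 * (γ - β)) ≠ 0 := by
    rw [starRingEnd_apply]; exact star_ne_zero.2 hD
  have hτ : (starRingEnd ℂ) τ = τ := by
    rw [hτdef, map_div₀, div_eq_div_iff hDc hD]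
    simp only [map_mul, map_sub, map_add, map_div₀, map_pow, Complex.conj_conj,
      Complex.conj_ofReal, map_ofNat, hcb, hcg]
    field_simp
    ring
  apply refl_pair_char
  · refine ⟨τ.re, ?_⟩
    have hτre : (τ.re : ℂ) = τ := Complex.conj_eq_iff_re.1 hτ
    rw [AffineMap.lineMap_apply, midpoint_eq_smul_add, invOf_eq_inv]
    simp only [vsub_eq_sub, vadd_eq_add, Complex.real_smul, hτre, Complex.ofReal_inv,
      Complex.ofReal_ofNat]
    rw [hτdef]
    field_simp
    ring
  · rw [Complex.inner]
    apply re_zero_of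
    simp only [map_mul, map_sub, map_add, map_div₀, map_pow, Complex.conj_conj,
      Complex.conj_ofReal, map_ofNat, hcb, hcg]
    field_simp
    ring

private lemma normSq_eq_of (a h b c o : ℂ) (ho : (2:ℂ) * o = a + b + c - h)
    (hinner : ((starRingEnd ℂ) (a - h) * (b - c)).re = 0) :
    Complex.normSq (b - o) = Complex.normSq (c - o) := by
  have h1 := congrArg Complex.re ho
  have h2 := congrArg Complex.im ho
  simp only [Complex.mul_re, Complex.mul_im, Complex.add_re, Complex.add_im, Complex.sub_re,
    Complex.sub_im, Complex.re_ofNat, Complex.im_ofNat] at h1 h2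
  simp only [Complex.mul_re, Complex.sub_re, Complex.sub_im, Complex.conj_re, Complex.conj_im] at hinner
  simp only [Complex.normSq_apply, Complex.sub_re, Complex.sub_im]
  linear_combination (c.re - b.re) * h1 + (c.im - b.im) * h2 - hinner

private lemma prod_conj (u v w : ℂ) (r : ℝ) (hu : u ≠ 0) (hv : v ≠ 0) (hw : w ≠ 0)
    (hr2 : (r:ℂ)^2 ≠ 0)
    (hcu : (starRingEnd ℂ) u = (r:ℂ)^2 / u)
    (hcv : (starRingEnd ℂ) v = (r:ℂ)^2 / v)
    (hcw : (starRingEnd ℂ) w = (r:ℂ)^2 / w) :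
    (-(v * w) / u) * (starRingEnd ℂ) (-(v * w) / u) = (r:ℂ)^2 := by
  simp only [map_mul, map_sub, map_add, map_neg, map_div₀, map_pow, Complex.conj_conj,
      Complex.conj_ofReal, hcu, hcv, hcw]
  field_simp

private lemma hterm (u v w : ℂ) (r : ℝ) (hu : u ≠ 0) (hv : v ≠ 0) (hw : w ≠ 0)
    (hr2 : (r:ℂ)^2 ≠ 0) (hcu : (starRingEnd ℂ) u = (r:ℂ)^2/u) :
    -(v * u) / w * (-(u * w) / v) * (starRingEnd ℂ) u / (r:ℂ)^2 = u := by
  rw [hcu]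
  have hr0 : (r:ℂ) ≠ 0 := fun h0 => hr2 (by rw [h0]; ring)
  field_simp

set_option maxHeartbeats 1000000 in
private lemma main_complex (a b c h a' b' c' x y z : ℂ)
    (h1 : ⟪c - a, b - a⟫ ≠ (0:ℝ)) (h2 : ⟪a - b, c - b⟫ ≠ (0:ℝ)) (h3 : ⟪b - c, a - c⟫ ≠ (0:ℝ))
    (hH1 : ⟪a - h, b - c⟫ = (0:ℝ)) (hH2 : ⟪b - h, c - a⟫ = (0:ℝ)) (hH3 : ⟪c - h, a - b⟫ = (0:ℝ))
    (ha' : a' = EuclideanGeometry.reflection (affineSpan ℝ {b, c}) h)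
    (hb' : b' = EuclideanGeometry.reflection (affineSpan ℝ {c, a}) h)
    (hc' : c' = EuclideanGeometry.reflection (affineSpan ℝ {a, b}) h)
    (hx : x = EuclideanGeometry.reflection (affineSpan ℝ {b', c'}) a)
    (hy : y = EuclideanGeometry.reflection (affineSpan ℝ {c', a'}) b)
    (hz : z = EuclideanGeometry.reflection (affineSpan ℝ {a', b'}) c) :
    ⟪x - h, y - z⟫ = (0:ℝ) ∧ ⟪y - h, z - x⟫ = (0:ℝ) ∧ ⟪z - h, x - y⟫ = (0:ℝ) := by
  have hab : a ≠ b := by rintro rfl; exact h2 (by simp [Complex.inner])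
  have hca : c ≠ a := by rintro rfl; exact h1 (by simp [Complex.inner])
  have hbc : b ≠ c := by rintro rfl; exact h3 (by simp [Complex.inner])
  obtain ⟨o, ho2⟩ : ∃ o : ℂ, (2:ℂ) * o = a + b + c - h := ⟨(a + b + c - h)/2, by ring⟩
  rw [Complex.inner] at hH1 hH2 hH3
  have n1 : Complex.normSq (b - o) = Complex.normSq (c - o) := normSq_eq_of a h b c o ho2 (by rw [mul_comm]; exact hH1)
  have n2 : Complex.normSq (c - o) = Complex.normSq (a - o) :=
    normSq_eq_of b h c a o (by linear_combination ho2) (by rw [mul_comm]; exact hH2)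
  obtain ⟨α, rfl⟩ : ∃ t, a = o + t := ⟨a - o, by ring⟩
  obtain ⟨β, rfl⟩ : ∃ t, b = o + t := ⟨b - o, by ring⟩
  obtain ⟨γ, rfl⟩ : ∃ t, c = o + t := ⟨c - o, by ring⟩
  obtain ⟨δ, rfl⟩ : ∃ t, h = o + t := ⟨h - o, by ring⟩
  have hδ : δ = α + β + γ := by linear_combination ho2
  subst hδ
  simp only [add_sub_cancel_left] at n1 n2
  have hαβ : α ≠ β := fun hs => hab (by rw [hs])
  have hγα : γ ≠ α := fun hs => hca (by rw [hs])
  have hβγ : β ≠ γ := fun hs => hbc (by rw [hs])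
  obtain ⟨r, hrdef⟩ : ∃ t : ℝ, t = ‖α‖ := ⟨_, rfl⟩
  have hαα : α * (starRingEnd ℂ) α = (r:ℂ)^2 := by
    rw [Complex.mul_conj, hrdef]; norm_cast; exact (Complex.sq_norm _).symm
  have hββ : β * (starRingEnd ℂ) β = (r:ℂ)^2 := by
    rw [Complex.mul_conj, hrdef]; norm_cast; rw [Complex.sq_norm]; exact n1.trans n2
  have hγγ : γ * (starRingEnd ℂ) γ = (r:ℂ)^2 := by
    rw [Complex.mul_conj, hrdef]; norm_cast; rw [Complex.sq_norm]; exact n2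
  have hr : r ≠ 0 := by
    intro h0
    have ha0 : α = 0 := norm_eq_zero.1 (hrdef.symm.trans h0 : ‖α‖ = 0)
    have hb0 : β = 0 := Complex.normSq_eq_zero.1 (by rw [n1, n2, ha0]; simp)
    have hc0 : γ = 0 := Complex.normSq_eq_zero.1 (by rw [n2, ha0]; simp)
    exact hβγ (hb0.trans hc0.symm)
  have hr' : (r:ℂ) ≠ 0 := Complex.ofReal_ne_zero.2 hr
  have hr2 : (r:ℂ)^2 ≠ 0 := pow_ne_zero 2 hr'
  have hα : α ≠ 0 := fun h0 => hr2 (by rw [← hαα, h0]; simp)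
  have hβ : β ≠ 0 := fun h0 => hr2 (by rw [← hββ, h0]; simp)
  have hγ : γ ≠ 0 := fun h0 => hr2 (by rw [← hγγ, h0]; simp)
  have hcα : (starRingEnd ℂ) α = (r:ℂ)^2 / α := by rw [eq_div_iff hα]; linear_combination hαα
  have hcβ : (starRingEnd ℂ) β = (r:ℂ)^2 / β := by rw [eq_div_iff hβ]; linear_combination hββ
  have hcγ : (starRingEnd ℂ) γ = (r:ℂ)^2 / γ := by rw [eq_div_iff hγ]; linear_combination hγγ
  have hsumβγ : β + γ ≠ 0 := by
    intro hs
    apply h1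
    rw [Complex.inner]
    apply re_zero_of
    rw [show o + γ - (o + α) = γ - α from by ring,
      show o + β - (o + α) = -γ - α from by linear_combination hs]
    simp only [map_mul, map_sub, map_add, map_neg, map_div₀, map_pow, Complex.conj_conj,
      Complex.conj_ofReal, hcα, hcβ, hcγ]
    field_simp
    ring
  have hsumγα : γ + α ≠ 0 := by
    intro hs
    apply h2
    rw [Complex.inner]
    apply re_zero_of
    rw [show o + α - (o + β) = α - β from by ring,
      show o + γ - (o + β) = -α - β from by linear_combination hs]
    simp only [map_mul, map_sub, map_add, map_neg, map_div₀, map_pow, Complex.conj_conj,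
      Complex.conj_ofReal, hcα, hcβ, hcγ]
    field_simp
    ring
  have hsumαβ : α + β ≠ 0 := by
    intro hs
    apply h3
    rw [Complex.inner]
    apply re_zero_of
    rw [show o + β - (o + γ) = β - γ from by ring,
      show o + α - (o + γ) = -β - γ from by linear_combination hs]
    simp only [map_mul, map_sub, map_add, map_neg, map_div₀, map_pow, Complex.conj_conj,
      Complex.conj_ofReal, hcα, hcβ, hcγ]
    field_simp
    ring
  -- first round of reflections
  rw [chord_reflection o β γ (α + β + γ) r hr hββ hγγ hβγ] at ha'
  have hb'refl : b' = o + γ + α - γ * α * (starRingEnd ℂ) (α + β + γ) / (r:ℂ)^2 := by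
    rw [hb', chord_reflection o γ α (α + β + γ) r hr hγγ hαα hγα]
  have hc'refl : c' = o + α + β - α * β * (starRingEnd ℂ) (α + β + γ) / (r:ℂ)^2 := by
    rw [hc', chord_reflection o α β (α + β + γ) r hr hαα hββ hαβ]
  have ha'2 : a' = o + -(β * γ) / α := by
    rw [ha']
    simp only [map_mul, map_sub, map_add, map_neg, map_div₀, map_pow, Complex.conj_conj,
      Complex.conj_ofReal, hcα, hcβ, hcγ]
    field_simp
    ring
  have hb'2 : b' = o + -(γ * α) / β := by
    rw [hb'refl]
    simp only [map_mul, map_sub, map_add, map_neg, map_div₀, map_pow, Complex.conj_conj,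
      Complex.conj_ofReal, hcα, hcβ, hcγ]
    field_simp
    ring
  have hc'2 : c' = o + -(α * β) / γ := by
    rw [hc'refl]
    simp only [map_mul, map_sub, map_add, map_neg, map_div₀, map_pow, Complex.conj_conj,
      Complex.conj_ofReal, hcα, hcβ, hcγ]
    field_simp
    ring
  -- second round prerequisites
  have ha'a' : (-(β * γ) / α) * (starRingEnd ℂ) (-(β * γ) / α) = (r:ℂ)^2 :=
    prod_conj α β γ r hα hβ hγ hr2 hcα hcβ hcγ
  have hb'b' : (-(γ * α) / β) * (starRingEnd ℂ) (-(γ * α) / β) = (r:ℂ)^2 :=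
    prod_conj β γ α r hβ hγ hα hr2 hcβ hcγ hcα
  have hc'c' : (-(α * β) / γ) * (starRingEnd ℂ) (-(α * β) / γ) = (r:ℂ)^2 :=
    prod_conj γ α β r hγ hα hβ hr2 hcγ hcα hcβ
  have hne : ∀ u v w : ℂ, u ≠ 0 → v ≠ 0 → w ≠ 0 → v ≠ w → v + w ≠ 0 →
      -(v * u) / w ≠ -(u * w) / v := by
    intro u v w hu hv hw hvw hsum heq
    rw [div_eq_div_iff hw hv] at heq
    have : u * (v - w) * (v + w) = 0 := by linear_combination -heq
    rcases mul_eq_zero.1 this with h' | h'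
    · rcases mul_eq_zero.1 h' with h'' | h''
      · exact hu h''
      · exact hvw (by linear_combination h'')
    · exact hsum h'
  have hb'c' : -(γ * α) / β ≠ -(α * β) / γ := by
    have := hne α γ β hα hγ hβ (fun hs => hβγ hs.symm)
      (fun hs => hsumβγ (by linear_combination hs))
    convert this using 2 <;> ring
  have hc'a' : -(α * β) / γ ≠ -(β * γ) / α := by
    have := hne β α γ hβ hα hγ (fun hs => hγα hs.symm)
      (fun hs => hsumγα (by linear_combination hs))
    convert this using 2 <;> ring
  have ha'b' : -(β * γ) / α ≠ -(γ * α) / β := by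
    have := hne γ β α hγ hβ hα (fun hs => hαβ hs.symm)
      (fun hs => hsumαβ (by linear_combination hs))
    convert this using 2 <;> ring
  -- second round of reflections
  rw [hb'2, hc'2,
    chord_reflection o (-(γ * α) / β) (-(α * β) / γ) α r hr hb'b' hc'c' hb'c'] at hx
  rw [hc'2, ha'2,
    chord_reflection o (-(α * β) / γ) (-(β * γ) / α) β r hr hc'c' ha'a' hc'a'] at hy
  rw [ha'2, hb'2,
    chord_reflection o (-(β * γ) / α) (-(γ * α) / β) γ r hr ha'a' hb'b' ha'b'] at hz
  rw [hterm α γ β r hα hγ hβ hr2 hcα] at hx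
  rw [hterm β α γ r hβ hα hγ hr2 hcβ] at hy
  rw [hterm γ β α r hγ hβ hα hr2 hcγ] at hz
  have hxh : x - (o + (α + β + γ)) = -((β + γ) * (α * β + β * γ + γ * α)) / (β * γ) := by
    rw [hx]; field_simp; ring
  have hyh : y - (o + (α + β + γ)) = -((γ + α) * (α * β + β * γ + γ * α)) / (γ * α) := by
    rw [hy]; field_simp; ring
  have hzh : z - (o + (α + β + γ)) = -((α + β) * (α * β + β * γ + γ * α)) / (α * β) := by
    rw [hz]; field_simp; ring
  have hyz : y - z = -((α * β + β * γ + γ * α) * (β - γ)) / (β * γ) := by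
    have : y - z = (y - (o + (α + β + γ))) - (z - (o + (α + β + γ))) := by ring
    rw [this, hyh, hzh]; field_simp; ring
  have hzx : z - x = -((α * β + β * γ + γ * α) * (γ - α)) / (γ * α) := by
    have : z - x = (z - (o + (α + β + γ))) - (x - (o + (α + β + γ))) := by ring
    rw [this, hzh, hxh]; field_simp; ring
  have hxy : x - y = -((α * β + β * γ + γ * α) * (α - β)) / (α * β) := by
    have : x - y = (x - (o + (α + β + γ))) - (y - (o + (α + β + γ))) := by ring
    rw [this, hxh, hyh]; field_simp; ring
  refine ⟨?_, ?_, ?_⟩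
  · rw [Complex.inner]
    apply re_zero_of
    rw [hxh, hyz]
    simp only [map_mul, map_sub, map_add, map_neg, map_div₀, map_pow, Complex.conj_conj,
      Complex.conj_ofReal, hcα, hcβ, hcγ]
    field_simp
    ring
  · rw [Complex.inner]
    apply re_zero_of
    rw [hyh, hzx]
    simp only [map_mul, map_sub, map_add, map_neg, map_div₀, map_pow, Complex.conj_conj,
      Complex.conj_ofReal, hcα, hcβ, hcγ]
    field_simp
    ring
  · rw [Complex.inner]
    apply re_zero_of
    rw [hzh, hxy]
    simp only [map_mul, map_sub, map_add, map_neg, map_div₀, map_pow, Complex.conj_conj,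
      Complex.conj_ofReal, hcα, hcβ, hcγ]
    field_simp
    ring

theorem stmt7
    (A B C H A' B' C' X Y Z : EuclideanSpace ℝ (Fin 2))

    (hacute : ∠ C A B < π / 2 ∧ ∠ A B C < π / 2 ∧ ∠ B C A < π / 2)
    (hH₁ : ⟪A - H, B - C⟫ = (0:ℝ)) (hH₂ : ⟪B - H, C - A⟫ = (0:ℝ))
    (hH₃ : ⟪C - H, A - B⟫ = (0:ℝ))
    (hA' : A' = EuclideanGeometry.reflection (affineSpan ℝ {B, C}) H)
    (hB' : B' = EuclideanGeometry.reflection (affineSpan ℝ {C, A}) H)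
    (hC' : C' = EuclideanGeometry.reflection (affineSpan ℝ {A, B}) H)
    (hX : X = EuclideanGeometry.reflection (affineSpan ℝ {B', C'}) A)
    (hY : Y = EuclideanGeometry.reflection (affineSpan ℝ {C', A'}) B)
    (hZ : Z = EuclideanGeometry.reflection (affineSpan ℝ {A', B'}) C)
    (hXYZ : AffineIndependent ℝ ![X, Y, Z]) :
    ⟪X - H, Y - Z⟫ = (0:ℝ) ∧ ⟪Y - H, Z - X⟫ = (0:ℝ) ∧ ⟪Z - H, X - Y⟫ = (0:ℝ) := by
  set f : ℂ ≃ₗᵢ[ℝ] EuclideanSpace ℝ (Fin 2) :=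
    Complex.isometryOfOrthonormal (EuclideanSpace.basisFun (Fin 2) ℝ) with hf
  set a := f.symm A with ha
  set b := f.symm B with hb
  set c := f.symm C with hc
  set h := f.symm H with hh
  set a' := f.symm A' with ha'
  set b' := f.symm B' with hb'
  set c' := f.symm C' with hc'
  set x := f.symm X with hx
  set y := f.symm Y with hy
  set z := f.symm Z with hz
  have hAf : A = f a := (f.apply_symm_apply A).symm
  have hBf : B = f b := (f.apply_symm_apply B).symm
  have hCf : C = f c := (f.apply_symm_apply C).symm
  have hHf : H = f h := (f.apply_symm_apply H).symm
  have hA'f : A' = f a' := (f.apply_symm_apply A').symm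
  have hB'f : B' = f b' := (f.apply_symm_apply B').symm
  have hC'f : C' = f c' := (f.apply_symm_apply C').symm
  have hXf : X = f x := (f.apply_symm_apply X).symm
  have hYf : Y = f y := (f.apply_symm_apply Y).symm
  have hZf : Z = f z := (f.apply_symm_apply Z).symm
  have hIP : ∀ u v : ℂ, ⟪f u, f v⟫ = (⟪u, v⟫ : ℝ) := fun u v => f.inner_map_map u v
  -- transported orthocenter conditions
  have hH1' : ⟪a - h, b - c⟫ = (0:ℝ) := by
    rw [← hIP (a - h) (b - c), map_sub, map_sub, ← hAf, ← hHf, ← hBf, ← hCf]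
    exact hH₁
  have hH2' : ⟪b - h, c - a⟫ = (0:ℝ) := by
    rw [← hIP (b - h) (c - a), map_sub, map_sub, ← hBf, ← hHf, ← hCf, ← hAf]
    exact hH₂
  have hH3' : ⟪c - h, a - b⟫ = (0:ℝ) := by
    rw [← hIP (c - h) (a - b), map_sub, map_sub, ← hCf, ← hHf, ← hAf, ← hBf]
    exact hH₃
  -- transported acuteness (as non-right angles)
  have hne1 : ⟪c - a, b - a⟫ ≠ (0:ℝ) := by
    intro h0
    have h1 : ⟪C - A, B - A⟫ = (0:ℝ) := by
      rw [← f.symm.inner_map_map (C - A) (B - A), map_sub, map_sub]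
      exact h0
    have h2 : InnerProductGeometry.angle (C - A) (B - A) = π / 2 :=
      (InnerProductGeometry.inner_eq_zero_iff_angle_eq_pi_div_two _ _).1 h1
    have h3 : ∠ C A B = π / 2 := h2
    linarith [hacute.1, h3.ge, h3.le]
  have hne2 : ⟪a - b, c - b⟫ ≠ (0:ℝ) := by
    intro h0
    have h1 : ⟪A - B, C - B⟫ = (0:ℝ) := by
      rw [← f.symm.inner_map_map (A - B) (C - B), map_sub, map_sub]
      exact h0
    have h2 : InnerProductGeometry.angle (A - B) (C - B) = π / 2 :=
      (InnerProductGeometry.inner_eq_zero_iff_angle_eq_pi_div_two _ _).1 h1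
    have h3 : ∠ A B C = π / 2 := h2
    linarith [hacute.2.1]
  have hne3 : ⟪b - c, a - c⟫ ≠ (0:ℝ) := by
    intro h0
    have h1 : ⟪B - C, A - C⟫ = (0:ℝ) := by
      rw [← f.symm.inner_map_map (B - C) (A - C), map_sub, map_sub]
      exact h0
    have h2 : InnerProductGeometry.angle (B - C) (A - C) = π / 2 :=
      (InnerProductGeometry.inner_eq_zero_iff_angle_eq_pi_div_two _ _).1 h1
    have h3 : ∠ B C A = π / 2 := h2
    linarith [hacute.2.2]
  -- transported reflections
  have ea' : a' = EuclideanGeometry.reflection (affineSpan ℝ {b, c}) h := by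
    have := hA'
    rw [hBf, hCf, hHf, refl_map f b c h] at this
    rw [ha', this, f.symm_apply_apply]
  have eb' : b' = EuclideanGeometry.reflection (affineSpan ℝ {c, a}) h := by
    have := hB'
    rw [hCf, hAf, hHf, refl_map f c a h] at this
    rw [hb', this, f.symm_apply_apply]
  have ec' : c' = EuclideanGeometry.reflection (affineSpan ℝ {a, b}) h := by
    have := hC'
    rw [hAf, hBf, hHf, refl_map f a b h] at this
    rw [hc', this, f.symm_apply_apply]
  have ex : x = EuclideanGeometry.reflection (affineSpan ℝ {b', c'}) a := by
    have := hX
    rw [hB'f, hC'f, hAf, refl_map f b' c' a] at this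
    rw [hx, this, f.symm_apply_apply]
  have ey : y = EuclideanGeometry.reflection (affineSpan ℝ {c', a'}) b := by
    have := hY
    rw [hC'f, hA'f, hBf, refl_map f c' a' b] at this
    rw [hy, this, f.symm_apply_apply]
  have ez : z = EuclideanGeometry.reflection (affineSpan ℝ {a', b'}) c := by
    have := hZ
    rw [hA'f, hB'f, hCf, refl_map f a' b' c] at this
    rw [hz, this, f.symm_apply_apply]
  obtain ⟨g1, g2, g3⟩ := main_complex a b c h a' b' c' x y z hne1 hne2 hne3 hH1' hH2' hH3'
    ea' eb' ec' ex ey ez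
  refine ⟨?_, ?_, ?_⟩
  · rw [← f.symm.inner_map_map (X - H) (Y - Z), map_sub, map_sub]; exact g1
  · rw [← f.symm.inner_map_map (Y - H) (Z - X), map_sub, map_sub]; exact g2
  · rw [← f.symm.inner_map_map (Z - H) (X - Y), map_sub, map_sub]; exact g3
end

section
/- Let ABC be a triangle inscribed in a circle with incenter I, and let A', B', C' be the second intersection points of the angle bisectors AI, BI, CI with the circumcircle. Then the lines A'I and B'C' are perpendicular. -/
open EuclideanGeometry Real RealInnerProductSpace

section Aux

variable {V : Type*} [NormedAddCommGroup V] [InnerProductSpace ℝ V]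
  [Fact (Module.finrank ℝ V = 2)]

private lemma stmt8_bisector_oriented (o : Orientation ℝ V (Fin 2)) {u v w : V}
    (hu : u ≠ 0) (hv : v ≠ 0) (hw : w ≠ 0)
    (h : InnerProductGeometry.angle u v = InnerProductGeometry.angle v w)
    (hns : ¬ SameRay ℝ u w) :
    o.oangle u v = o.oangle v w := by
  have h1 : |(o.oangle u v).toReal| = |(o.oangle v w).toReal| := by
    rw [← o.angle_eq_abs_oangle_toReal hu hv, ← o.angle_eq_abs_oangle_toReal hv hw]
    exact h
  rcases abs_eq_abs.mp h1 with h2 | h2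
  · exact Real.Angle.toReal_injective h2
  · exfalso
    apply hns
    rw [← o.oangle_eq_zero_iff_sameRay]
    have h3 : o.oangle u v = -(o.oangle v w) := by
      rw [← Real.Angle.coe_toReal (o.oangle u v), h2, Real.Angle.coe_neg,
        Real.Angle.coe_toReal]
    rw [← o.oangle_add hu hv hw, h3]
    abel

omit [Fact (Module.finrank ℝ V = 2)] in
private lemma stmt8_collinear_of_sameRay {P Q R : V} (h : SameRay ℝ (Q - P) (R - P)) :
    Collinear ℝ ({P, Q, R} : Set V) := by
  obtain ⟨u, a, b, -, -, -, hQ, hR⟩ := h.exists_eq_smul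
  rw [collinear_iff_of_mem (Set.mem_insert P {Q, R})]
  refine ⟨u, ?_⟩
  intro p hp
  simp only [Set.mem_insert_iff, Set.mem_singleton_iff] at hp
  rcases hp with rfl | rfl | rfl
  · exact ⟨0, by simp⟩
  · refine ⟨a, ?_⟩
    rw [← hQ, vadd_eq_add]
    abel
  · refine ⟨b, ?_⟩
    rw [← hR, vadd_eq_add]
    abel

end Aux

theorem stmt8
    (A B C I A' B' C' O : EuclideanSpace ℝ (Fin 2))
 (R : ℝ)
    (htri : AffineIndependent ℝ ![A, B, C])
    (hO : dist O A = R ∧ dist O B = R ∧ dist O C = R)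
    (hIA : I ≠ A) (hIB : I ≠ B) (hIC : I ≠ C)
    (hI₁ : ∠ B A I = ∠ I A C) (hI₂ : ∠ A B I = ∠ I B C) (hI₃ : ∠ B C I = ∠ I C A)
    (hA' : A' ≠ A ∧ dist O A' = R ∧ A' ∈ affineSpan ℝ ({A, I} : Set (EuclideanSpace ℝ (Fin 2))))
    (hB' : B' ≠ B ∧ dist O B' = R ∧ B' ∈ affineSpan ℝ ({B, I} : Set (EuclideanSpace ℝ (Fin 2))))
    (hC' : C' ≠ C ∧ dist O C' = R ∧ C' ∈ affineSpan ℝ ({C, I} : Set (EuclideanSpace ℝ (Fin 2)))) :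
    ⟪A' - I, B' - C'⟫ = (0:ℝ) := by
  obtain ⟨hOA, hOB, hOC⟩ := hO
  obtain ⟨hA'A, hOA', hA'mem⟩ := hA'
  obtain ⟨hB'B, hOB', hB'mem⟩ := hB'
  obtain ⟨hC'C, hOC', hC'mem⟩ := hC'
  by_cases hC'B' : C' = B'
  · simp [hC'B']
  -- noncollinearity and distinctness
  have hncol : ¬ Collinear ℝ ({A, B, C} : Set (EuclideanSpace ℝ (Fin 2))) :=
    affineIndependent_iff_not_collinear_set.mp htri
  have hinj := htri.injective
  have hBA : B ≠ A := by
    intro h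
    have : (![A, B, C] 1) = (![A, B, C] 0) := by simpa using h
    exact absurd (hinj this) (by decide)
  have hCA : C ≠ A := by
    intro h
    have : (![A, B, C] 2) = (![A, B, C] 0) := by simpa using h
    exact absurd (hinj this) (by decide)
  have hCB : C ≠ B := by
    intro h
    have : (![A, B, C] 2) = (![A, B, C] 1) := by simpa using h
    exact absurd (hinj this) (by decide)
  -- R is nonzero
  have hR0 : R ≠ 0 := by
    intro h
    rw [h, dist_eq_zero] at hOA hOB
    exact hBA (hOB.symm.trans hOA)
  -- nonzero difference vectors
  have vIA : I - A ≠ 0 := sub_ne_zero_of_ne hIA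
  have vIB : I - B ≠ 0 := sub_ne_zero_of_ne hIB
  have vIC : I - C ≠ 0 := sub_ne_zero_of_ne hIC
  have vBA : B - A ≠ 0 := sub_ne_zero_of_ne hBA
  have vCA : C - A ≠ 0 := sub_ne_zero_of_ne hCA
  have vCB : C - B ≠ 0 := sub_ne_zero_of_ne hCB
  have vAB : A - B ≠ 0 := sub_ne_zero_of_ne hBA.symm
  have vAC : A - C ≠ 0 := sub_ne_zero_of_ne hCA.symm
  have vBC : B - C ≠ 0 := sub_ne_zero_of_ne hCB.symm
  have vB'B : B' - B ≠ 0 := sub_ne_zero_of_ne hB'B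
  have vC'C : C' - C ≠ 0 := sub_ne_zero_of_ne hC'C
  have vC'B' : C' - B' ≠ 0 := sub_ne_zero_of_ne hC'B'
  -- norms of radii vectors
  have hnA : ‖A - O‖ = R := by rw [← dist_eq_norm, dist_comm]; exact hOA
  have hnB : ‖B - O‖ = R := by rw [← dist_eq_norm, dist_comm]; exact hOB
  have hnC : ‖C - O‖ = R := by rw [← dist_eq_norm, dist_comm]; exact hOC
  have hnB' : ‖B' - O‖ = R := by rw [← dist_eq_norm, dist_comm]; exact hOB'
  have hnC' : ‖C' - O‖ = R := by rw [← dist_eq_norm, dist_comm]; exact hOC'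
  have vAO : A - O ≠ 0 := fun h => hR0 (by rw [← hnA, h, norm_zero])
  have vBO : B - O ≠ 0 := fun h => hR0 (by rw [← hnB, h, norm_zero])
  have vC'O : C' - O ≠ 0 := fun h => hR0 (by rw [← hnC', h, norm_zero])
  -- orientation
  haveI : Fact (Module.finrank ℝ (EuclideanSpace ℝ (Fin 2)) = 2) := ⟨finrank_euclideanSpace_fin⟩
  set o : Orientation ℝ (EuclideanSpace ℝ (Fin 2)) (Fin 2) :=
    (EuclideanSpace.basisFun (Fin 2) ℝ).toBasis.orientation with ho
  -- unsigned angle hypotheses as vector angles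
  have hI₁' : InnerProductGeometry.angle (B - A) (I - A)
      = InnerProductGeometry.angle (I - A) (C - A) := by
    simpa [EuclideanGeometry.angle, vsub_eq_sub] using hI₁
  have hI₂' : InnerProductGeometry.angle (A - B) (I - B)
      = InnerProductGeometry.angle (I - B) (C - B) := by
    simpa [EuclideanGeometry.angle, vsub_eq_sub] using hI₂
  have hI₃' : InnerProductGeometry.angle (B - C) (I - C)
      = InnerProductGeometry.angle (I - C) (A - C) := by
    simpa [EuclideanGeometry.angle, vsub_eq_sub] using hI₃
  -- non-same-ray conditions
  have hnsA : ¬ SameRay ℝ (B - A) (C - A) := fun hs => hncol (stmt8_collinear_of_sameRay hs)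
  have hnsB : ¬ SameRay ℝ (A - B) (C - B) := fun hs =>
    hncol ((stmt8_collinear_of_sameRay hs).subset (by intro x hx; simp at hx ⊢; tauto))
  have hnsC : ¬ SameRay ℝ (B - C) (A - C) := fun hs =>
    hncol ((stmt8_collinear_of_sameRay hs).subset (by intro x hx; simp at hx ⊢; tauto))
  -- oriented bisector conditions
  have hoA : o.oangle (B - A) (I - A) = o.oangle (I - A) (C - A) :=
    stmt8_bisector_oriented o vBA vIA vCA hI₁' hnsA
  have hoB : o.oangle (A - B) (I - B) = o.oangle (I - B) (C - B) :=
    stmt8_bisector_oriented o vAB vIB vCB hI₂' hnsB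
  have hoC : o.oangle (B - C) (I - C) = o.oangle (I - C) (A - C) :=
    stmt8_bisector_oriented o vBC vIC vAC hI₃' hnsC
  -- collinearity (doubled) conditions for B' and C'
  have hB'dir : (2:ℤ) • o.oangle (I - B) (B' - B) = 0 := by
    obtain ⟨r, hr⟩ := vadd_left_mem_affineSpan_pair.mp
      (show (B' - B) +ᵥ B ∈ line[ℝ, B, I] by simpa using hB'mem)
    rw [vsub_eq_sub] at hr
    have hrne : r ≠ 0 := by rintro rfl; rw [zero_smul] at hr; exact vB'B hr.symm
    rw [← hr]
    rcases hrne.lt_or_gt with h | h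
    · rw [o.oangle_smul_right_of_neg _ _ h, o.oangle_neg_self_right vIB]
      exact Real.Angle.two_zsmul_coe_pi
    · rw [o.oangle_smul_right_of_pos _ _ h, o.oangle_self, smul_zero]
  have hC'dir : (2:ℤ) • o.oangle (I - C) (C' - C) = 0 := by
    obtain ⟨r, hr⟩ := vadd_left_mem_affineSpan_pair.mp
      (show (C' - C) +ᵥ C ∈ line[ℝ, C, I] by simpa using hC'mem)
    rw [vsub_eq_sub] at hr
    have hrne : r ≠ 0 := by rintro rfl; rw [zero_smul] at hr; exact vC'C hr.symm
    rw [← hr]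
    rcases hrne.lt_or_gt with h | h
    · rw [o.oangle_smul_right_of_neg _ _ h, o.oangle_neg_self_right vIC]
      exact Real.Angle.two_zsmul_coe_pi
    · rw [o.oangle_smul_right_of_pos _ _ h, o.oangle_self, smul_zero]
  -- inscribed angle facts
  have hs2' : o.oangle (B - O) (C' - O) = (2:ℤ) • o.oangle (B' - B) (C' - B') := by
    have h := o.oangle_eq_two_zsmul_oangle_sub_of_norm_eq_real
      (x := B' - O) (y := B - O) (z := C' - O)
      (fun h => hB'B (by rwa [sub_left_inj] at h))
      (fun h => hC'B' (by rw [sub_left_inj] at h; exact h.symm)) hnB' hnB hnC'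
    rw [sub_sub_sub_cancel_right, sub_sub_sub_cancel_right] at h
    rw [h, show B - B' = -(B' - B) from (neg_sub _ _).symm, o.two_zsmul_oangle_neg_left]
  have hs4 : o.oangle (B - O) (A - O) = (2:ℤ) • o.oangle (B - C) (A - C) := by
    have h := o.oangle_eq_two_zsmul_oangle_sub_of_norm_eq_real
      (x := C - O) (y := B - O) (z := A - O)
      (fun h => hCB (by rwa [sub_left_inj] at h))
      (fun h => hCA (by rwa [sub_left_inj] at h)) hnC hnB hnA
    rwa [sub_sub_sub_cancel_right, sub_sub_sub_cancel_right] at h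
  have hs5 : o.oangle (A - O) (C' - O) = (2:ℤ) • o.oangle (A - C) (C' - C) := by
    have h := o.oangle_eq_two_zsmul_oangle_sub_of_norm_eq_real
      (x := C - O) (y := A - O) (z := C' - O)
      (fun h => hCA (by rwa [sub_left_inj] at h))
      (fun h => hC'C (by rw [sub_left_inj] at h; exact h.symm)) hnC hnA hnC'
    rwa [sub_sub_sub_cancel_right, sub_sub_sub_cancel_right] at h
  -- the central angle from B to C'
  have hμ : o.oangle (B - O) (C' - O) = o.oangle (B - C) (A - C) := by
    rw [(o.oangle_add vBO vAO vC'O).symm, hs4, hs5]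
    have h1 : (2:ℤ) • o.oangle (A - C) (C' - C) = (2:ℤ) • o.oangle (A - C) (I - C) := by
      rw [← o.oangle_add vAC vIC vC'C, smul_add, hC'dir, add_zero]
    rw [h1, ← smul_add, o.oangle_add vBC vAC vIC, two_zsmul]
    nth_rewrite 2 [hoC]
    rw [o.oangle_add vBC vIC vAC]
  have hq1 : (2:ℤ) • o.oangle (B' - B) (C' - B') = o.oangle (B - C) (A - C) :=
    hs2'.symm.trans hμ
  -- step h8
  have hoB' : o.oangle (C - B) (I - B) = o.oangle (I - B) (A - B) := by
    calc o.oangle (C - B) (I - B) = -o.oangle (I - B) (C - B) := o.oangle_rev _ _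
      _ = -o.oangle (A - B) (I - B) := by rw [hoB]
      _ = o.oangle (I - B) (A - B) := (o.oangle_rev _ _).symm
  have h8 : (2:ℤ) • o.oangle (I - A) (I - B) =
      o.oangle (B - A) (C - A) + (2:ℤ) • o.oangle (C - A) (C - B)
        + o.oangle (C - B) (A - B) := by
    have e : o.oangle (I - A) (I - B) =
        o.oangle (I - A) (C - A) + o.oangle (C - A) (C - B) + o.oangle (C - B) (I - B) := by
      rw [o.oangle_add vIA vCA vCB, o.oangle_add vIA vCB vIB]
    rw [e, smul_add, smul_add, two_zsmul (o.oangle (I - A) (C - A)),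
      two_zsmul (o.oangle (C - B) (I - B))]
    nth_rewrite 1 [← hoA]
    rw [o.oangle_add vBA vIA vCA]
    nth_rewrite 2 [hoB']
    rw [o.oangle_add vCB vIB vAB]
  -- main angle computation
  have hT : (2:ℤ) • o.oangle (I - A) (C' - B') = (π : Real.Angle) := by
    have e1 : o.oangle (I - A) (C' - B') =
        o.oangle (I - A) (I - B) + o.oangle (I - B) (B' - B)
          + o.oangle (B' - B) (C' - B') := by
      rw [o.oangle_add vIA vIB vB'B, o.oangle_add vIA vB'B vC'B']
    rw [e1, smul_add, smul_add, hB'dir, add_zero, hq1, h8]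
    have hx : o.oangle (B - C) (A - C) = -o.oangle (C - A) (C - B) := by
      rw [show B - C = -(C - B) from (neg_sub _ _).symm,
        show A - C = -(C - A) from (neg_sub _ _).symm, o.oangle_neg_neg, o.oangle_rev]
    have key : o.oangle (B - A) (C - A) + o.oangle (C - A) (C - B)
        + o.oangle (C - B) (A - B) = (π : Real.Angle) := by
      rw [o.oangle_add vBA vCA vCB, o.oangle_add vBA vCB vAB,
        show A - B = -(B - A) from (neg_sub _ _).symm, o.oangle_neg_self_right vBA]
    rw [hx, two_zsmul, ← key]
    abel
  -- perpendicularity of I-A and C'-B'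
  have hperp : ⟪I - A, C' - B'⟫ = (0:ℝ) :=
    o.eq_zero_or_oangle_eq_iff_inner_eq_zero.mp
      (Or.inr (Or.inr (Real.Angle.two_zsmul_eq_pi_iff.mp hT)))
  -- transfer to A'
  obtain ⟨t, ht⟩ := vadd_left_mem_affineSpan_pair.mp
    (show (A' - A) +ᵥ A ∈ line[ℝ, A, I] by simpa using hA'mem)
  rw [vsub_eq_sub] at ht
  have hA'I : A' - I = (t - 1) • (I - A) := by
    rw [sub_smul, one_smul, ht]
    abel
  have hBC' : B' - C' = -(C' - B') := (neg_sub _ _).symm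
  rw [hA'I, hBC', real_inner_smul_left, inner_neg_right, hperp]
  ring
end

section
/- Let ABC be an acute triangle inscribed in a circle of radius R, with orthocenter H, and let B', C' be the reflections of H over CA, AB, and X the reflection of A over line B'C'. Then AX·BC = AH·B'C'. -/
private lemma fin3 (P0 P1 be0 be1 al0 al1 m0 m1 R2 : ℝ) (hR2 : R2 ≠ 0)
    (ha : al0^2 + al1^2 = R2) (hb : be0^2 + be1^2 = R2)
    (e3re : P0*be0 - P1*be1 + (al0*m0 - al1*m1) = 0)
    (e3im : P0*be1 + P1*be0 + (al0*m1 + al1*m0) = 0) :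
    P0^2 + P1^2 = m0^2 + m1^2 := by
  have h' : R2 * (P0^2 + P1^2) = R2 * (m0^2 + m1^2) := by
    linear_combination (P0*be0 - P1*be1 - (al0*m0 - al1*m1))*e3re
      + (P0*be1 + P1*be0 - (al0*m1 + al1*m0))*e3im
      - (P0^2+P1^2)*hb + (m0^2+m1^2)*ha
  exact mul_left_cancel₀ hR2 h'

private lemma fin2 (P0 P1 Q0 Q1 be0 be1 ga0 ga1 al0 al1 m0 m1 R2 : ℝ) (hR2 : R2 ≠ 0)
    (ha : al0^2 + al1^2 = R2) (hb : be0^2 + be1^2 = R2) (hc : ga0^2 + ga1^2 = R2)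
    (e3re : P0*be0 - P1*be1 + (al0*m0 - al1*m1) = 0)
    (e3im : P0*be1 + P1*be0 + (al0*m1 + al1*m0) = 0)
    (e4re : Q0*ga0 - Q1*ga1 + (al0*m0 - al1*m1) = 0)
    (e4im : Q0*ga1 + Q1*ga0 + (al0*m1 + al1*m0) = 0) :
    R2 * (P0*Q0 + P1*Q1) = (m0^2 + m1^2) * (be0*ga0 + be1*ga1) := by
  set g := be0*ga0 + be1*ga1 with hg
  set d := be1*ga0 - be0*ga1 with hd
  set s := P0*Q0 + P1*Q1 with hs
  have Y0 : ℝ := 0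
  have h' : R2 * (R2 * s) = R2 * ((m0^2 + m1^2) * g) := by
    linear_combination
      (g*(Q0*ga0 - Q1*ga1) - d*(Q0*ga1 + Q1*ga0))*e3re
      + (g*(Q0*ga1 + Q1*ga0) + d*(Q0*ga0 - Q1*ga1))*e3im
      + (-g*(al0*m0 - al1*m1) - d*(al0*m1 + al1*m0))*e4re
      + (-g*(al0*m1 + al1*m0) + d*(al0*m0 - al1*m1))*e4im
      - (s*(ga0^2+ga1^2))*hb - (s*R2)*hc + ((m0^2+m1^2)*g)*ha
  exact mul_left_cancel₀ hR2 h'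

private lemma fin1 (S1 S4 BC2 mm s g R2 : ℝ)
    (h3 : S1 = 2*mm + 2*s) (h4 : S4 = 2*mm - 2*s) (hRs : R2*s = mm*g)
    (hbc : BC2 - mm = -4*g) (hi : mm + BC2 = 4*R2) : S1*BC2 = mm*S4 := by
  linear_combination BC2*h3 - mm*h4 + 2*mm*hbc + 2*s*hi + 8*hRs

private lemma key (a0 a1 b0 b1 c0 c1 o0 o1 h0 h1 bp0 bp1 cp0 cp1 x0 x1 t1 t2 : ℝ)
    (hdet : (b0-a0)*(c1-a1) - (b1-a1)*(c0-a0) ≠ 0)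
    (huu : (a0-c0)^2 + (a1-c1)^2 ≠ 0)
    (hvv : (a0-b0)^2 + (a1-b1)^2 ≠ 0)
    (hR2 : (a0-o0)^2 + (a1-o1)^2 ≠ 0)
    (E1 : (a0-h0)*(b0-c0) + (a1-h1)*(b1-c1) = 0)
    (E2 : (b0-h0)*(c0-a0) + (b1-h1)*(c1-a1) = 0)
    (K1 : (o0-b0)^2 + (o1-b1)^2 = (o0-a0)^2 + (o1-a1)^2)
    (K2 : (o0-c0)^2 + (o1-c1)^2 = (o0-a0)^2 + (o1-a1)^2)
    (hp0 : bp0 = 2*(c0 + t1*(c0-a0)) - h0) (hp1 : bp1 = 2*(c1 + t1*(c1-a1)) - h1)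
    (hF1 : (a0-c0)*(h0-(c0+t1*(c0-a0))) + (a1-c1)*(h1-(c1+t1*(c1-a1))) = 0)
    (hq0 : cp0 = 2*(a0 + t2*(a0-b0)) - h0) (hq1 : cp1 = 2*(a1 + t2*(a1-b1)) - h1)
    (hF2 : (b0-a0)*(h0-(a0+t2*(a0-b0))) + (b1-a1)*(h1-(a1+t2*(a1-b1))) = 0)
    (hx0 : x0 = bp0 + cp0 - a0) (hx1 : x1 = bp1 + cp1 - a1) :
    ((a0-x0)^2 + (a1-x1)^2) * ((b0-c0)^2 + (b1-c1)^2)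
      = ((a0-h0)^2 + (a1-h1)^2) * ((bp0-cp0)^2 + (bp1-cp1)^2) := by
  have hd0 : (a0+b0+c0-2*o0-h0) * ((b0-a0)*(c1-a1) - (b1-a1)*(c0-a0)) = 0 := by
    linear_combination (c1-a1)*E1 + (c1-b1)*E2 + (c1-a1)*K1 - (b1-a1)*K2
  have hd1 : (a1+b1+c1-2*o1-h1) * ((b0-a0)*(c1-a1) - (b1-a1)*(c0-a0)) = 0 := by
    linear_combination (a0-c0)*E1 + (b0-c0)*E2 - (c0-a0)*K1 + (b0-a0)*K2
  have h0e : h0 = a0+b0+c0-2*o0 := by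
    rcases mul_eq_zero.mp hd0 with h | h
    · linarith
    · exact absurd h hdet
  have h1e : h1 = a1+b1+c1-2*o1 := by
    rcases mul_eq_zero.mp hd1 with h | h
    · linarith
    · exact absurd h hdet
  subst h0e h1e hx0 hx1
  have e3re : ((bp0-a0)*(b0-o0) - (bp1-a1)*(b1-o1) + ((a0-o0)*(b0+c0-2*o0) - (a1-o1)*(b1+c1-2*o1))) = 0 := by
    have hsc : (((a0-c0)^2 + (a1-c1)^2)) * ((bp0-a0)*(b0-o0) - (bp1-a1)*(b1-o1) + ((a0-o0)*(b0+c0-2*o0) - (a1-o1)*(b1+c1-2*o1))) = 0 := by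
      rw [hp0, hp1]
      linear_combination ((-2)*(b1-o1)*(c1-o1) + (2)*(b0-o0)*(c0-o0) + (2)*(a1-o1)*(b1-o1) + (-2)*(a0-o0)*(b0-o0)) * hF1 + ((-1)*(c1-o1)^2 + (c0-o0)^2 + (2)*(a1-o1)*(c1-o1) + (-1)*(a1-o1)^2 + (-2)*(a0-o0)*(c0-o0) + (a0-o0)^2) * K1 + ((-1)*(b1-o1)*(c1-o1) + (b0-o0)*(c0-o0) + (-1)*(a1-o1)*(c1-o1) + (a1-o1)*(b1-o1) + (a1-o1)^2 + (a0-o0)*(c0-o0) + (-1)*(a0-o0)*(b0-o0) + (-1)*(a0-o0)^2) * K2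
    rcases mul_eq_zero.mp hsc with h | h
    · exact absurd h huu
    · exact h
  have e3im : ((bp0-a0)*(b1-o1) + (bp1-a1)*(b0-o0) + ((a0-o0)*(b1+c1-2*o1) + (a1-o1)*(b0+c0-2*o0))) = 0 := by
    have hsc : (((a0-c0)^2 + (a1-c1)^2)) * ((bp0-a0)*(b1-o1) + (bp1-a1)*(b0-o0) + ((a0-o0)*(b1+c1-2*o1) + (a1-o1)*(b0+c0-2*o0))) = 0 := by
      rw [hp0, hp1]
      linear_combination ((2)*(b1-o1)*(c0-o0) + (2)*(b0-o0)*(c1-o1) + (-2)*(a1-o1)*(b0-o0) + (-2)*(a0-o0)*(b1-o1)) * hF1 + ((2)*(c0-o0)*(c1-o1) + (-2)*(a1-o1)*(c0-o0) + (-2)*(a0-o0)*(c1-o1) + (2)*(a0-o0)*(a1-o1)) * K1 + ((b1-o1)*(c0-o0) + (b0-o0)*(c1-o1) + (a1-o1)*(c0-o0) + (-1)*(a1-o1)*(b0-o0) + (a0-o0)*(c1-o1) + (-1)*(a0-o0)*(b1-o1) + (-2)*(a0-o0)*(a1-o1)) * K2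
    rcases mul_eq_zero.mp hsc with h | h
    · exact absurd h huu
    · exact h
  have e4re : ((cp0-a0)*(c0-o0) - (cp1-a1)*(c1-o1) + ((a0-o0)*(b0+c0-2*o0) - (a1-o1)*(b1+c1-2*o1))) = 0 := by
    have hsc : (((a0-b0)^2 + (a1-b1)^2)) * ((cp0-a0)*(c0-o0) - (cp1-a1)*(c1-o1) + ((a0-o0)*(b0+c0-2*o0) - (a1-o1)*(b1+c1-2*o1))) = 0 := by
      rw [hq0, hq1]
      linear_combination ((2)*(b1-o1)*(c1-o1) + (-2)*(b0-o0)*(c0-o0) + (-2)*(a1-o1)*(c1-o1) + (2)*(a0-o0)*(c0-o0)) * hF2 + ((-1)*(c1-o1)^2 + (-1)*(c0-o0)^2 + (-1)*(b1-o1)*(c1-o1) + (b0-o0)*(c0-o0) + (a1-o1)*(c1-o1) + (-1)*(a1-o1)*(b1-o1) + (2)*(a1-o1)^2 + (-1)*(a0-o0)*(c0-o0) + (a0-o0)*(b0-o0)) * K1 + ((2)*(b0-o0)^2 + (2)*(a1-o1)*(b1-o1) + (-2)*(a1-o1)^2 + (-2)*(a0-o0)*(b0-o0)) * K2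
    rcases mul_eq_zero.mp hsc with h | h
    · exact absurd h hvv
    · exact h
  have e4im : ((cp0-a0)*(c1-o1) + (cp1-a1)*(c0-o0) + ((a0-o0)*(b1+c1-2*o1) + (a1-o1)*(b0+c0-2*o0))) = 0 := by
    have hsc : (((a0-b0)^2 + (a1-b1)^2)) * ((cp0-a0)*(c1-o1) + (cp1-a1)*(c0-o0) + ((a0-o0)*(b1+c1-2*o1) + (a1-o1)*(b0+c0-2*o0))) = 0 := by
      rw [hq0, hq1]
      linear_combination ((-2)*(b1-o1)*(c0-o0) + (-2)*(b0-o0)*(c1-o1) + (2)*(a1-o1)*(c0-o0) + (2)*(a0-o0)*(c1-o1)) * hF2 + ((b1-o1)*(c0-o0) + (b0-o0)*(c1-o1) + (-1)*(a1-o1)*(c0-o0) + (a1-o1)*(b0-o0) + (-1)*(a0-o0)*(c1-o1) + (a0-o0)*(b1-o1) + (-2)*(a0-o0)*(a1-o1)) * K1 + ((2)*(b0-o0)*(b1-o1) + (-2)*(a1-o1)*(b0-o0) + (-2)*(a0-o0)*(b1-o1) + (2)*(a0-o0)*(a1-o1)) * K2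
    rcases mul_eq_zero.mp hsc with h | h
    · exact absurd h hvv
    · exact h
  have ha : (a0-o0)^2 + (a1-o1)^2 = ((a0-o0)^2 + (a1-o1)^2) := by ring
  have hb : (b0-o0)^2 + (b1-o1)^2 = ((a0-o0)^2 + (a1-o1)^2) := by linear_combination K1
  have hc : (c0-o0)^2 + (c1-o1)^2 = ((a0-o0)^2 + (a1-o1)^2) := by linear_combination K2
  have hPP : (bp0-a0)^2 + (bp1-a1)^2 = ((b0+c0-2*o0)^2 + (b1+c1-2*o1)^2) := by
    have := fin3 (bp0-a0) (bp1-a1) (b0-o0) (b1-o1) (a0-o0) (a1-o1)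
      (b0+c0-2*o0) (b1+c1-2*o1) (((a0-o0)^2 + (a1-o1)^2)) hR2 ha hb (by linear_combination e3re) (by linear_combination e3im)
    linear_combination this
  have hQQ : (cp0-a0)^2 + (cp1-a1)^2 = ((b0+c0-2*o0)^2 + (b1+c1-2*o1)^2) := by
    have := fin3 (cp0-a0) (cp1-a1) (c0-o0) (c1-o1) (a0-o0) (a1-o1)
      (b0+c0-2*o0) (b1+c1-2*o1) (((a0-o0)^2 + (a1-o1)^2)) hR2 ha hc (by linear_combination e4re) (by linear_combination e4im)
    linear_combination this
  have hRs : (((a0-o0)^2 + (a1-o1)^2)) * ((bp0-a0)*(cp0-a0) + (bp1-a1)*(cp1-a1)) = (((b0+c0-2*o0)^2 + (b1+c1-2*o1)^2)) * ((b0-o0)*(c0-o0) + (b1-o1)*(c1-o1)) := by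
    have := fin2 (bp0-a0) (bp1-a1) (cp0-a0) (cp1-a1) (b0-o0) (b1-o1) (c0-o0) (c1-o1)
      (a0-o0) (a1-o1) (b0+c0-2*o0) (b1+c1-2*o1) (((a0-o0)^2 + (a1-o1)^2)) hR2 ha hb hc
      (by linear_combination e3re) (by linear_combination e3im)
      (by linear_combination e4re) (by linear_combination e4im)
    linear_combination this
  have h3 : ((a0-(bp0+cp0-a0))^2 + (a1-(bp1+cp1-a1))^2) = 2*(((b0+c0-2*o0)^2 + (b1+c1-2*o1)^2)) + 2*(((bp0-a0)*(cp0-a0) + (bp1-a1)*(cp1-a1))) := by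
    linear_combination hPP + hQQ
  have h4 : ((bp0-cp0)^2 + (bp1-cp1)^2) = 2*(((b0+c0-2*o0)^2 + (b1+c1-2*o1)^2)) - 2*(((bp0-a0)*(cp0-a0) + (bp1-a1)*(cp1-a1))) := by
    linear_combination hPP + hQQ
  have hbc : (((b0-c0)^2 + (b1-c1)^2)) - (((b0+c0-2*o0)^2 + (b1+c1-2*o1)^2)) = -4*(((b0-o0)*(c0-o0) + (b1-o1)*(c1-o1))) := by ring
  have hi : (((b0+c0-2*o0)^2 + (b1+c1-2*o1)^2)) + (((b0-c0)^2 + (b1-c1)^2)) = 4*(((a0-o0)^2 + (a1-o1)^2)) := by linear_combination 2*K1 + 2*K2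
  have hfin := fin1 ((a0-(bp0+cp0-a0))^2 + (a1-(bp1+cp1-a1))^2) ((bp0-cp0)^2 + (bp1-cp1)^2)
    (((b0-c0)^2 + (b1-c1)^2)) (((b0+c0-2*o0)^2 + (b1+c1-2*o1)^2)) (((bp0-a0)*(cp0-a0) + (bp1-a1)*(cp1-a1))) (((b0-o0)*(c0-o0) + (b1-o1)*(c1-o1))) (((a0-o0)^2 + (a1-o1)^2)) h3 h4 hRs hbc hi
  linear_combination hfin

open EuclideanGeometry Real RealInnerProductSpace

set_option maxHeartbeats 4000000 in
theorem stmt14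
    (A B C H B' C' X O : EuclideanSpace ℝ (Fin 2))
 (R : ℝ)
    (hacute : ∠ C A B < π / 2 ∧ ∠ A B C < π / 2 ∧ ∠ B C A < π / 2)
    (hH₁ : ⟪A - H, B - C⟫ = (0:ℝ)) (hH₂ : ⟪B - H, C - A⟫ = (0:ℝ))
    (hH₃ : ⟪C - H, A - B⟫ = (0:ℝ))
    (hO : dist O A = R ∧ dist O B = R ∧ dist O C = R)
    (hB' : B' = EuclideanGeometry.reflection (affineSpan ℝ {C, A}) H)
    (hC' : C' = EuclideanGeometry.reflection (affineSpan ℝ {A, B}) H)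
    (hX : X = EuclideanGeometry.reflection (affineSpan ℝ {B', C'}) A) :
    dist A X * dist B C = dist A H * dist B' C' := by
  obtain ⟨h1, h2, h3⟩ := hacute
  obtain ⟨hOA, hOB, hOC⟩ := hO
  have hpi : (0:ℝ) < π / 2 := by positivity
  -- distinctness
  have hAB : A ≠ B := by
    rintro rfl
    rw [EuclideanGeometry.angle_self_left] at h2; linarith
  have hCA : C ≠ A := by
    rintro rfl
    rw [EuclideanGeometry.angle_self_left] at h1; linarith
  have hBC : B ≠ C := by
    rintro rfl
    rw [EuclideanGeometry.angle_self_left] at h3; linarith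
  -- noncollinearity and determinant
  have hncol : ¬ Collinear ℝ ({A, B, C} : Set (EuclideanSpace ℝ (Fin 2))) := by
    intro hc
    have hpilt : π / 2 < π := by linarith [Real.pi_pos]
    rcases hc.wbtw_or_wbtw_or_wbtw with h | h | h
    · have : Sbtw ℝ A B C := ⟨h, hAB.symm, hBC⟩
      linarith [this.angle₁₂₃_eq_pi]
    · have : Sbtw ℝ B C A := ⟨h, hBC.symm, hCA⟩
      linarith [this.angle₁₂₃_eq_pi]
    · have : Sbtw ℝ C A B := ⟨h, hCA.symm, hAB⟩
      linarith [this.angle₁₂₃_eq_pi]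
  have hdet : (B 0 - A 0) * (C 1 - A 1) - (B 1 - A 1) * (C 0 - A 0) ≠ 0 := by
    intro hdet
    apply hncol
    have huv : ∃ r : ℝ, C - A = r • (B - A) := by
      by_cases h0 : B 0 - A 0 ≠ 0
      · refine ⟨(C 0 - A 0) / (B 0 - A 0), ?_⟩
        ext i
        fin_cases i
        · show C 0 - A 0 = (C 0 - A 0) / (B 0 - A 0) * (B 0 - A 0)
          field_simp
        · show C 1 - A 1 = (C 0 - A 0) / (B 0 - A 0) * (B 1 - A 1)
          field_simp
          nlinarith [hdet]
      · push_neg at h0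
        have h1' : B 1 - A 1 ≠ 0 := by
          intro h1'
          apply hAB
          ext i
          fin_cases i
          · show A 0 = B 0; linarith
          · show A 1 = B 1; linarith
        refine ⟨(C 1 - A 1) / (B 1 - A 1), ?_⟩
        ext i
        fin_cases i
        · show C 0 - A 0 = (C 1 - A 1) / (B 1 - A 1) * (B 0 - A 0)
          field_simp
          nlinarith [hdet]
        · show C 1 - A 1 = (C 1 - A 1) / (B 1 - A 1) * (B 1 - A 1)
          field_simp
    obtain ⟨r, hr⟩ := huv
    rw [collinear_iff_of_mem (Set.mem_insert A {B, C})]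
    refine ⟨B - A, ?_⟩
    intro p hp
    rcases hp with rfl | hp
    · exact ⟨0, by simp⟩
    rcases hp with rfl | hp
    · refine ⟨1, ?_⟩
      simp only [one_smul, vadd_eq_add]
      abel
    rw [Set.mem_singleton_iff] at hp
    subst hp
    refine ⟨r, ?_⟩
    rw [← hr]
    simp only [vadd_eq_add]
    abel
  -- squared distance in coordinates
  have dsq : ∀ X Y : EuclideanSpace ℝ (Fin 2),
      dist X Y ^ 2 = (X 0 - Y 0)^2 + (X 1 - Y 1)^2 := by
    intro X Y
    rw [EuclideanSpace.dist_eq, Real.sq_sqrt (by positivity)]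
    simp [Fin.sum_univ_two, Real.dist_eq, sq_abs]
  have dfor : ∀ X Y : EuclideanSpace ℝ (Fin 2),
      dist X Y = Real.sqrt ((X 0 - Y 0)^2 + (X 1 - Y 1)^2) := by
    intro X Y
    rw [EuclideanSpace.dist_eq]
    congr 1
    simp [Fin.sum_univ_two, Real.dist_eq, sq_abs]
  -- nondegeneracy of various squared lengths
  have sqpos : ∀ X Y : EuclideanSpace ℝ (Fin 2), X ≠ Y →
      (X 0 - Y 0)^2 + (X 1 - Y 1)^2 ≠ 0 := by
    intro X Y hne
    have : dist X Y ≠ 0 := dist_ne_zero.2 hne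
    rw [← dsq X Y]
    positivity
  have huu : (A 0 - C 0)^2 + (A 1 - C 1)^2 ≠ 0 := sqpos A C (Ne.symm hCA)
  have hvv : (A 0 - B 0)^2 + (A 1 - B 1)^2 ≠ 0 := sqpos A B hAB
  have hRpos : 0 < R := by
    have h1 : dist A B ≤ dist A O + dist O B := dist_triangle A O B
    have h2 : (0:ℝ) < dist A B := dist_pos.2 hAB
    rw [dist_comm A O, hOA, hOB] at h1
    linarith
  have hAO : A ≠ O := by
    intro h
    rw [h] at hOA
    simp at hOA
    linarith [hOA]
  have hR2 : (A 0 - O 0)^2 + (A 1 - O 1)^2 ≠ 0 := sqpos A O hAO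
  -- orthocenter conditions in coordinates
  have E1 : (A 0 - H 0)*(B 0 - C 0) + (A 1 - H 1)*(B 1 - C 1) = 0 := by
    have := hH₁
    simp [PiLp.inner_apply, Fin.sum_univ_two, RCLike.inner_apply] at this; linarith
  have E2 : (B 0 - H 0)*(C 0 - A 0) + (B 1 - H 1)*(C 1 - A 1) = 0 := by
    have := hH₂
    simp [PiLp.inner_apply, Fin.sum_univ_two, RCLike.inner_apply] at this; linarith
  -- circumcenter conditions in coordinates
  have K1 : (O 0 - B 0)^2 + (O 1 - B 1)^2 = (O 0 - A 0)^2 + (O 1 - A 1)^2 := by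
    have : dist O B ^ 2 = dist O A ^ 2 := by rw [hOA, hOB]
    rwa [dsq, dsq] at this
  have K2 : (O 0 - C 0)^2 + (O 1 - C 1)^2 = (O 0 - A 0)^2 + (O 1 - A 1)^2 := by
    have : dist O C ^ 2 = dist O A ^ 2 := by rw [hOA, hOC]
    rwa [dsq, dsq] at this
  -- reflection B' over line CA
  set s₁ : AffineSubspace ℝ (EuclideanSpace ℝ (Fin 2)) := affineSpan ℝ {C, A} with hs₁
  haveI : Nonempty s₁ := ⟨⟨C, left_mem_affineSpan_pair ℝ C A⟩⟩
  set F₁ : EuclideanSpace ℝ (Fin 2) :=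
    (EuclideanGeometry.orthogonalProjection s₁ H : EuclideanSpace ℝ (Fin 2)) with hF₁
  have hB'eq : B' = F₁ + F₁ - H := by
    rw [hB', EuclideanGeometry.reflection_apply']
    simp only [vsub_eq_sub, vadd_eq_add, ← hF₁]
    abel
  have hF₁mem : F₁ ∈ s₁ := EuclideanGeometry.orthogonalProjection_mem H
  have hFv : F₁ -ᵥ C ∈ s₁.direction :=
    AffineSubspace.vsub_mem_direction hF₁mem (left_mem_affineSpan_pair ℝ C A)
  rw [hs₁, direction_affineSpan, mem_vectorSpan_pair] at hFv
  obtain ⟨t₁, ht₁⟩ := hFv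
  have hperp₁' := EuclideanGeometry.vsub_orthogonalProjection_mem_direction_orthogonal s₁ H
  have hACdir : A -ᵥ C ∈ s₁.direction :=
    AffineSubspace.vsub_mem_direction (right_mem_affineSpan_pair ℝ C A)
      (left_mem_affineSpan_pair ℝ C A)
  have hperp₁ : ⟪A - C, H - F₁⟫ = (0:ℝ) := by
    have := (Submodule.mem_orthogonal _ _).1 hperp₁' (A -ᵥ C) hACdir
    simpa [vsub_eq_sub] using this
  have hF10 : F₁ 0 = C 0 + t₁ * (C 0 - A 0) := by
    have h0 := congrArg (fun v => v 0) ht₁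
    simp only [vsub_eq_sub, PiLp.smul_apply, PiLp.sub_apply, smul_eq_mul] at h0
    linarith
  have hF11 : F₁ 1 = C 1 + t₁ * (C 1 - A 1) := by
    have h0 := congrArg (fun v => v 1) ht₁
    simp only [vsub_eq_sub, PiLp.smul_apply, PiLp.sub_apply, smul_eq_mul] at h0
    linarith
  have hbp0 : B' 0 = 2*(C 0 + t₁*(C 0 - A 0)) - H 0 := by
    have h0 := congrArg (fun v => v 0) hB'eq
    simp only [PiLp.add_apply, PiLp.sub_apply] at h0
    rw [h0, hF10]; ring
  have hbp1 : B' 1 = 2*(C 1 + t₁*(C 1 - A 1)) - H 1 := by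
    have h0 := congrArg (fun v => v 1) hB'eq
    simp only [PiLp.add_apply, PiLp.sub_apply] at h0
    rw [h0, hF11]; ring
  have hFone : (A 0 - C 0)*(H 0 - (C 0 + t₁*(C 0 - A 0)))
      + (A 1 - C 1)*(H 1 - (C 1 + t₁*(C 1 - A 1))) = 0 := by
    have := hperp₁
    simp only [PiLp.inner_apply, Fin.sum_univ_two, RCLike.inner_apply, PiLp.sub_apply,
      starRingEnd_apply, star_trivial] at this
    rw [← hF10, ← hF11]
    linarith
  -- reflection C' over line AB
  set s₂ : AffineSubspace ℝ (EuclideanSpace ℝ (Fin 2)) := affineSpan ℝ {A, B} with hs₂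
  haveI : Nonempty s₂ := ⟨⟨A, left_mem_affineSpan_pair ℝ A B⟩⟩
  set F₂ : EuclideanSpace ℝ (Fin 2) :=
    (EuclideanGeometry.orthogonalProjection s₂ H : EuclideanSpace ℝ (Fin 2)) with hF₂
  have hC'eq : C' = F₂ + F₂ - H := by
    rw [hC', EuclideanGeometry.reflection_apply']
    simp only [vsub_eq_sub, vadd_eq_add, ← hF₂]
    abel
  have hF₂mem : F₂ ∈ s₂ := EuclideanGeometry.orthogonalProjection_mem H
  have hFv2 : F₂ -ᵥ A ∈ s₂.direction :=
    AffineSubspace.vsub_mem_direction hF₂mem (left_mem_affineSpan_pair ℝ A B)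
  rw [hs₂, direction_affineSpan, mem_vectorSpan_pair] at hFv2
  obtain ⟨t₂, ht₂⟩ := hFv2
  have hperp₂' := EuclideanGeometry.vsub_orthogonalProjection_mem_direction_orthogonal s₂ H
  have hBAdir : B -ᵥ A ∈ s₂.direction :=
    AffineSubspace.vsub_mem_direction (right_mem_affineSpan_pair ℝ A B)
      (left_mem_affineSpan_pair ℝ A B)
  have hperp₂ : ⟪B - A, H - F₂⟫ = (0:ℝ) := by
    have := (Submodule.mem_orthogonal _ _).1 hperp₂' (B -ᵥ A) hBAdir
    simpa [vsub_eq_sub] using this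
  have hF20 : F₂ 0 = A 0 + t₂ * (A 0 - B 0) := by
    have h0 := congrArg (fun v => v 0) ht₂
    simp only [vsub_eq_sub, PiLp.smul_apply, PiLp.sub_apply, smul_eq_mul] at h0
    linarith
  have hF21 : F₂ 1 = A 1 + t₂ * (A 1 - B 1) := by
    have h0 := congrArg (fun v => v 1) ht₂
    simp only [vsub_eq_sub, PiLp.smul_apply, PiLp.sub_apply, smul_eq_mul] at h0
    linarith
  have hcp0 : C' 0 = 2*(A 0 + t₂*(A 0 - B 0)) - H 0 := by
    have h0 := congrArg (fun v => v 0) hC'eq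
    simp only [PiLp.add_apply, PiLp.sub_apply] at h0
    rw [h0, hF20]; ring
  have hcp1 : C' 1 = 2*(A 1 + t₂*(A 1 - B 1)) - H 1 := by
    have h0 := congrArg (fun v => v 1) hC'eq
    simp only [PiLp.add_apply, PiLp.sub_apply] at h0
    rw [h0, hF21]; ring
  have hFtwo : (B 0 - A 0)*(H 0 - (A 0 + t₂*(A 0 - B 0)))
      + (B 1 - A 1)*(H 1 - (A 1 + t₂*(A 1 - B 1))) = 0 := by
    have := hperp₂
    simp only [PiLp.inner_apply, Fin.sum_univ_two, RCLike.inner_apply, PiLp.sub_apply,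
      starRingEnd_apply, star_trivial] at this
    rw [← hF20, ← hF21]
    linarith
  -- X = B' + C' - A
  have hAB' : dist A B' = dist A H := by
    rw [hB']
    exact EuclideanGeometry.dist_reflection_eq_of_mem _ (right_mem_affineSpan_pair ℝ C A) H
  have hAC' : dist A C' = dist A H := by
    rw [hC']
    exact EuclideanGeometry.dist_reflection_eq_of_mem _ (left_mem_affineSpan_pair ℝ A B) H
  have hiso : ‖B' - A‖ = ‖C' - A‖ := by
    rw [← dist_eq_norm, ← dist_eq_norm, dist_comm B' A, dist_comm C' A, hAB', hAC']
  have hXval : X = B' + C' - A := by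
    set s₃ : AffineSubspace ℝ (EuclideanSpace ℝ (Fin 2)) := affineSpan ℝ {B', C'} with hs₃
    haveI : Nonempty s₃ := ⟨⟨B', left_mem_affineSpan_pair ℝ B' C'⟩⟩
    set N : EuclideanSpace ℝ (Fin 2) := midpoint ℝ B' C' with hN
    have hNv : N = (2⁻¹ : ℝ) • (B' + C') := by
      rw [hN, midpoint_eq_smul_add, invOf_eq_inv]
    have hNmem : N ∈ s₃ := AffineMap.lineMap_mem_affineSpan_pair _ _ _
    have hNperp : N -ᵥ A ∈ s₃.directionᗮ := by
      rw [Submodule.mem_orthogonal]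
      intro u hu
      rw [hs₃, direction_affineSpan, mem_vectorSpan_pair] at hu
      obtain ⟨r, rfl⟩ := hu
      have hsq : ⟪B' - A, B' - A⟫ = (⟪C' - A, C' - A⟫ : ℝ) := by
        rw [real_inner_self_eq_norm_sq, real_inner_self_eq_norm_sq, hiso]
      have hin : ⟪B' - C', N - A⟫ = (0:ℝ) := by
        have expand : ⟪B' - C', N - A⟫ = 2⁻¹*(⟪B' - A, B' - A⟫ - (⟪C' - A, C' - A⟫ : ℝ)) := by
          rw [hNv]
          simp only [inner_sub_left, inner_sub_right, inner_smul_right, inner_add_right,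
            inner_add_left]
          rw [real_inner_comm B' C', real_inner_comm B' A, real_inner_comm C' A]
          ring
        rw [expand, hsq]; ring
      simp only [vsub_eq_sub]
      rw [real_inner_smul_left, hin, mul_zero]
    have hproj : (EuclideanGeometry.orthogonalProjection s₃ A : EuclideanSpace ℝ (Fin 2)) = N := by
      have hint := EuclideanGeometry.inter_eq_singleton_orthogonalProjection (s := s₃) A
      have hNin : N ∈ (s₃ : Set (EuclideanSpace ℝ (Fin 2)))
          ∩ (AffineSubspace.mk' A s₃.directionᗮ : Set _) :=
        ⟨hNmem, (AffineSubspace.mem_mk').2 hNperp⟩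
      rw [hint] at hNin
      exact hNin.symm
    rw [hX, EuclideanGeometry.reflection_apply', hproj, hNv]
    simp only [vsub_eq_sub, vadd_eq_add]
    module
  have hx0 : X 0 = B' 0 + C' 0 - A 0 := by
    have h0 := congrArg (fun v => v 0) hXval
    simpa [PiLp.add_apply, PiLp.sub_apply] using h0
  have hx1 : X 1 = B' 1 + C' 1 - A 1 := by
    have h0 := congrArg (fun v => v 1) hXval
    simpa [PiLp.add_apply, PiLp.sub_apply] using h0
  -- final assembly
  have hkey := key (A 0) (A 1) (B 0) (B 1) (C 0) (C 1) (O 0) (O 1) (H 0) (H 1)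
    (B' 0) (B' 1) (C' 0) (C' 1) (X 0) (X 1) t₁ t₂ hdet huu hvv hR2 E1 E2 K1 K2
    hbp0 hbp1 hFone hcp0 hcp1 hFtwo hx0 hx1
  rw [dfor A X, dfor B C, dfor A H, dfor B' C']
  rw [← Real.sqrt_mul (by positivity), ← Real.sqrt_mul (by positivity)]
  congr 1
end
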